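/- arXiv:2107.10145 — 5 statements merged into one kernel-verified Lean document; each statement's English description precedes it below -/
import Mathlib

section
/- Let φ⁻¹ : [Re > 0] → 𝔻 be the inverse Cayley transform φ⁻¹(s) = (s−1)/(s+1). For all t, y ∈ ℝ, setting A_ε(t,y) = |φ⁻¹(ε + iyε + it) − φ⁻¹(it)| / (1 − |φ⁻¹(ε + iyε + it)|) for ε > 0, one has lim_{ε→0⁺} A_ε(t,y) = |1 + iy|. Consequently, for every α > |1 + iy| there exists ε₀ > 0 such that for all 0 < ε < ε₀ the point φ⁻¹(ε + iyε + it) lies in the Stolz region S(α, φ⁻¹(it)) = {z ∈ 𝔻 : |z − φ⁻¹(it)| ≤ α(1 − |z|)}. -/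
open Complex MeasureTheory Filter Topology Set
open scoped Classical

noncomputable section

/-- A frequency: a strictly increasing sequence of nonnegative reals tending to infinity. -/
def IsFrequency (lam : ℕ → ℝ) : Prop :=
  StrictMono lam ∧ (∀ n, 0 ≤ lam n) ∧ Tendsto lam atTop atTop

/-- The `(λ,k)`-Riesz mean `R_x^{λ,k}(s) = Σ_{λ_n < x} a_n e^{-λ_n s} (1 - λ_n/x)^k`. -/
def RieszMean (lam : ℕ → ℝ) (a : ℕ → ℂ) (k : ℝ) (x : ℝ) (s : ℂ) : ℂ :=
  ∑' n, if lam n < x then a n * Complex.exp (-(lam n : ℂ) * s) * (((1 - lam n / x) ^ k : ℝ) : ℂ)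
    else 0

/-- `f` possesses a `λ`-Riesz germ with coefficients `a`: on some nonempty open subset of the
right half-plane, `f` is the pointwise limit of the `(λ,m)`-Riesz means for some `m ≥ 0`. -/
def HasRieszGerm (lam : ℕ → ℝ) (a : ℕ → ℂ) (f : ℂ → ℂ) : Prop :=
  ∃ m : ℝ, 0 ≤ m ∧ ∃ U : Set ℂ, IsOpen U ∧ U.Nonempty ∧ U ⊆ {s : ℂ | 0 < s.re} ∧
    ∀ s ∈ U, Tendsto (fun x : ℝ => RieszMean lam a m x s) atTop (nhds (f s))

/-- Membership in `H^λ_{∞,ℓ}[Re > 0]` with coefficients `a`. -/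
def MemHlam (lam : ℕ → ℝ) (a : ℕ → ℂ) (l : ℝ) (f : ℂ → ℂ) : Prop :=
  DifferentiableOn ℂ f {s : ℂ | 0 < s.re} ∧
  (∃ C : ℝ, ∀ s : ℂ, 0 < s.re → ‖f s‖ ≤ C * (1 + ‖s‖) ^ l) ∧
  HasRieszGerm lam a f

/-- The horizontal limit function `f*(it) = lim_{ε→0⁺} f(ε + it)` (and `0` if no limit exists). -/
def horizLim (f : ℂ → ℂ) (t : ℝ) : ℂ :=
  if h : ∃ L : ℂ, Tendsto (fun e : ℝ => f ((e : ℂ) + (t : ℂ) * Complex.I))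
      (nhdsWithin 0 (Set.Ioi 0)) (nhds L)
  then h.choose else 0

/-- The Poisson kernel `P_u(t) = (1/π) u/(u² + t²)`. -/
def poisson (u t : ℝ) : ℝ := (1 / Real.pi) * u / (u ^ 2 + t ^ 2)

/-- The kernel `K_x^k(t) = (Γ(1+k) e / (2π)) · x / (1 + ixt)^{1+k}`. -/
def Kker (k : ℝ) (x t : ℝ) : ℂ :=
  ((Real.Gamma (1 + k) * Real.exp 1 / (2 * Real.pi) : ℝ) : ℂ) * (x : ℂ) /
    (1 + Complex.I * (x : ℂ) * (t : ℂ)) ^ ((1 + k : ℝ) : ℂ)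

/-- The kernel `R^{k,ℓ}(x,y) = ∫ P_{x⁻¹}(t-y) e^{itx} (1 + x⁻¹ + it)^ℓ K_x^k(t) dt`. -/
def Rker (k l : ℝ) (x y : ℝ) : ℂ :=
  ∫ t : ℝ, ((poisson x⁻¹ (t - y) : ℝ) : ℂ) * Complex.exp (Complex.I * (t : ℂ) * (x : ℂ)) *
    (1 + ((x⁻¹ : ℝ) : ℂ) + Complex.I * (t : ℂ)) ^ ((l : ℝ) : ℂ) * Kker k x t

/-- The inverse Cayley transform `φ⁻¹(s) = (s-1)/(s+1)` from the right half-plane to the disc. -/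
def cayleyInv (s : ℂ) : ℂ := (s - 1) / (s + 1)

lemma sq_abs_diff (s : ℂ) : ‖s+1‖^2 - ‖s-1‖^2 = 4 * s.re := by
  rw [Complex.sq_norm, Complex.sq_norm]
  simp [Complex.normSq_apply]
  ring

lemma abs_it_sub_one (t : ℝ) :
    ‖Complex.I * t - 1‖ = ‖Complex.I * t + 1‖ := by
  have : (Complex.I * t - 1) = -((starRingEnd ℂ) (Complex.I * t + 1)) := by
    simp [Complex.ext_iff]
  rw [this, norm_neg, Complex.norm_conj]

lemma cayley_diff {a b : ℂ} (ha : a + 1 ≠ 0) (hb : b + 1 ≠ 0) :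
    cayleyInv a - cayleyInv b = 2 * (a - b) / ((a + 1) * (b + 1)) := by
  unfold cayleyInv
  field_simp
  ring

lemma se_re (t y e : ℝ) :
    ((e : ℂ) + Complex.I * (y : ℂ) * (e : ℂ) + Complex.I * (t : ℂ)).re = e := by
  simp

lemma se_add_one_ne (t y : ℝ) {e : ℝ} (he : 0 < e) :
    ((e : ℂ) + Complex.I * (y : ℂ) * (e : ℂ) + Complex.I * (t : ℂ)) + 1 ≠ 0 := by
  intro h
  have := congrArg Complex.re h
  rw [Complex.add_re, se_re] at this
  simp at this
  linarith

lemma it_add_one_ne (t : ℝ) : (Complex.I * (t : ℂ)) + 1 ≠ 0 := by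
  intro h
  have := congrArg Complex.re h
  simp at this

lemma se_sq (t y : ℝ) (e : ℝ) :
    ‖((e : ℂ) + Complex.I * (y : ℂ) * (e : ℂ) + Complex.I * (t : ℂ)) + 1‖^2 -
      ‖((e : ℂ) + Complex.I * (y : ℂ) * (e : ℂ) + Complex.I * (t : ℂ)) - 1‖^2
      = 4 * e := by
  rw [sq_abs_diff, se_re]

/-- `A_ε(t,y) → |1+iy|` as `ε → 0⁺`, and consequently for every
`α > |1+iy|` the points `φ⁻¹(ε + iyε + it)` eventually lie in the Stolz region
`S(α, φ⁻¹(it))`. -/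
theorem statement1 (t y : ℝ) :
    Tendsto (fun e : ℝ =>
        ‖cayleyInv ((e : ℂ) + Complex.I * (y : ℂ) * (e : ℂ) + Complex.I * (t : ℂ))
            - cayleyInv (Complex.I * (t : ℂ))‖ /
          (1 - ‖cayleyInv ((e : ℂ) + Complex.I * (y : ℂ) * (e : ℂ) + Complex.I * (t : ℂ))‖))
      (nhdsWithin 0 (Set.Ioi 0)) (nhds (‖1 + Complex.I * (y : ℂ)‖)) ∧
    ∀ α : ℝ, ‖1 + Complex.I * (y : ℂ)‖ < α →
      ∃ ε₀ : ℝ, 0 < ε₀ ∧ ∀ e : ℝ, 0 < e → e < ε₀ →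
        cayleyInv ((e : ℂ) + Complex.I * (y : ℂ) * (e : ℂ) + Complex.I * (t : ℂ)) ∈
          {z : ℂ | ‖z‖ < 1 ∧
            ‖z - cayleyInv (Complex.I * (t : ℂ))‖ ≤ α * (1 - ‖z‖)} := by
  have hc0 : 0 < ‖Complex.I * (t : ℂ) + 1‖ :=
    norm_pos_iff.mpr (it_add_one_ne t)
  set b : ℝ := ‖1 + Complex.I * (y : ℂ)‖ with hbdef
  set c : ℝ := ‖Complex.I * (t : ℂ) + 1‖ with hcdef
  -- shorthand facts
  have hqlt : ∀ e : ℝ, 0 < e →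
      ‖((e : ℂ) + Complex.I * y * e + Complex.I * t) - 1‖ <
      ‖((e : ℂ) + Complex.I * y * e + Complex.I * t) + 1‖ := by
    intro e he
    nlinarith [se_sq t y e, norm_nonneg (((e : ℂ) + Complex.I * y * e + Complex.I * t) - 1),
      norm_nonneg (((e : ℂ) + Complex.I * y * e + Complex.I * t) + 1)]
  have habs : ∀ e : ℝ,
      ‖cayleyInv ((e : ℂ) + Complex.I * y * e + Complex.I * t)‖ =
      ‖((e : ℂ) + Complex.I * y * e + Complex.I * t) - 1‖ /
      ‖((e : ℂ) + Complex.I * y * e + Complex.I * t) + 1‖ := by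
    intro e
    unfold cayleyInv
    exact norm_div _ _
  have hlt1 : ∀ e : ℝ, 0 < e →
      ‖cayleyInv ((e : ℂ) + Complex.I * y * e + Complex.I * t)‖ < 1 := by
    intro e he
    rw [habs e]
    have hp : 0 < ‖((e : ℂ) + Complex.I * y * e + Complex.I * t) + 1‖ :=
      lt_of_le_of_lt (norm_nonneg _) (hqlt e he)
    rw [div_lt_one hp]
    exact hqlt e he
  have hnum : ∀ e : ℝ, 0 < e →
      ‖cayleyInv ((e : ℂ) + Complex.I * y * e + Complex.I * t)
          - cayleyInv (Complex.I * t)‖ =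
      2 * e * b / (‖((e : ℂ) + Complex.I * y * e + Complex.I * t) + 1‖ * c) := by
    intro e he
    rw [cayley_diff (se_add_one_ne t y he) (it_add_one_ne t)]
    have h2 : ((e : ℂ) + Complex.I * y * e + Complex.I * t) - Complex.I * t
        = (e : ℂ) * (1 + Complex.I * y) := by ring
    rw [show (2 : ℂ) * (((e : ℂ) + Complex.I * y * e + Complex.I * t) - Complex.I * t)
        = 2 * ((e : ℂ) * (1 + Complex.I * y)) by rw [h2]]
    rw [norm_div, norm_mul, norm_mul, norm_mul]
    simp only [Complex.norm_two, Complex.norm_real, Real.norm_eq_abs, abs_of_pos he, hbdef, hcdef]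
    ring
  -- the auxiliary continuous function g
  have hgcont : Continuous (fun e : ℝ =>
      b * (‖((e : ℂ) + Complex.I * y * e + Complex.I * t) + 1‖ +
           ‖((e : ℂ) + Complex.I * y * e + Complex.I * t) - 1‖) / (2 * c)) := by
    have hcontc : Continuous fun e : ℝ => ((e : ℂ) + Complex.I * y * e + Complex.I * t) := by
      fun_prop
    exact (continuous_const.mul
      ((continuous_norm.comp (hcontc.add continuous_const)).add
        (continuous_norm.comp (hcontc.sub continuous_const)))).div_const (2 * c)
  have hg0 : b * (‖(((0:ℝ) : ℂ) + Complex.I * y * ((0:ℝ):ℂ) + Complex.I * t) + 1‖ +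
           ‖(((0:ℝ):ℂ) + Complex.I * y * ((0:ℝ):ℂ) + Complex.I * t) - 1‖) / (2 * c) = b := by
    have h00 : ((0:ℝ):ℂ) + Complex.I * y * ((0:ℝ):ℂ) + Complex.I * t = Complex.I * t := by
      push_cast; ring
    rw [h00, abs_it_sub_one, ← hcdef, show c + c = 2 * c by ring,
      mul_div_assoc, div_self (by positivity), mul_one]
  have hgt : Tendsto (fun e : ℝ =>
      b * (‖((e : ℂ) + Complex.I * y * e + Complex.I * t) + 1‖ +
           ‖((e : ℂ) + Complex.I * y * e + Complex.I * t) - 1‖) / (2 * c))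
      (nhdsWithin 0 (Set.Ioi 0)) (nhds b) := by
    have h3 := (hgcont.tendsto 0).mono_left (nhdsWithin_le_nhds (s := Set.Ioi (0:ℝ)))
    rwa [hg0] at h3
  -- g agrees with A on Ioi 0
  have heq : ∀ e : ℝ, 0 < e →
      b * (‖((e : ℂ) + Complex.I * y * e + Complex.I * t) + 1‖ +
           ‖((e : ℂ) + Complex.I * y * e + Complex.I * t) - 1‖) / (2 * c) =
      ‖cayleyInv ((e : ℂ) + Complex.I * y * e + Complex.I * t)
          - cayleyInv (Complex.I * t)‖ /
        (1 - ‖cayleyInv ((e : ℂ) + Complex.I * y * e + Complex.I * t)‖) := by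
    intro e he
    rw [hnum e he, habs e]
    set p := ‖((e : ℂ) + Complex.I * y * e + Complex.I * t) + 1‖ with hp
    set q := ‖((e : ℂ) + Complex.I * y * e + Complex.I * t) - 1‖ with hq
    have hqp : q < p := hqlt e he
    have hq0 : 0 ≤ q := norm_nonneg _
    have hp0 : 0 < p := lt_of_le_of_lt hq0 hqp
    have hkey : p ^ 2 - q ^ 2 = 4 * e := se_sq t y e
    have hd : 1 - q / p = (p - q) / p := by field_simp
    rw [hd]
    have hpq0 : p - q ≠ 0 := by linarith
    field_simp
    linear_combination b * hkey
  have h1 : Tendsto (fun e : ℝ =>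
        ‖cayleyInv ((e : ℂ) + Complex.I * (y : ℂ) * (e : ℂ) + Complex.I * (t : ℂ))
            - cayleyInv (Complex.I * (t : ℂ))‖ /
          (1 - ‖cayleyInv ((e : ℂ) + Complex.I * (y : ℂ) * (e : ℂ) + Complex.I * (t : ℂ))‖))
      (nhdsWithin 0 (Set.Ioi 0)) (nhds b) := by
    apply hgt.congr'
    filter_upwards [self_mem_nhdsWithin] with e he
    exact heq e he
  refine ⟨h1, ?_⟩
  intro α hα
  have h2 := h1.eventually_lt_const hα
  rw [eventually_iff, mem_nhdsGT_iff_exists_Ioo_subset] at h2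
  obtain ⟨u, hu, hsub⟩ := h2
  refine ⟨u, hu, ?_⟩
  intro e he heu
  have hAe := hsub ⟨he, heu⟩
  simp only [Set.mem_setOf_eq] at hAe ⊢
  have hz1 := hlt1 e he
  refine ⟨hz1, ?_⟩
  have hd : 0 < 1 - ‖cayleyInv ((e : ℂ) + Complex.I * y * e + Complex.I * t)‖ := by
    linarith
  rw [div_lt_iff₀ hd] at hAe
  linarith
end
end

section
/- For every k > 0 one has ∫_ℝ e^{iy} · K^k(y) dy = 1, where K^k(y) = (Γ(1+k)·e/(2π)) · (1 + iy)^{−(1+k)}; in particular ∫_ℝ e^{iy}/(1 + iy)^{1+k} dy = 2π/(Γ(1+k)·e). -/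
open Complex MeasureTheory Filter Topology Set
open scoped Classical

noncomputable section

section aux7

open Metric
open scoped Real FourierTransform

lemma aux_intR {c σ : ℝ} (hc : 0 < c) (hσ : 0 < σ) :
    IntegrableOn (fun t : ℝ => Real.exp (-(c * t)) * t ^ (σ - 1)) (Ioi 0) := by
  have h := Real.GammaIntegral_convergent hσ
  rw [← mul_zero c, ← integrableOn_Ioi_comp_mul_left_iff _ _ hc] at h
  have h2 := h.const_mul ((c : ℝ) ^ (σ - 1))⁻¹
  refine IntegrableOn.congr_fun h2 (fun t ht => ?_) measurableSet_Ioi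
  rw [mem_Ioi] at ht
  have hcpos : (0:ℝ) < c ^ (σ - 1) := Real.rpow_pos_of_pos hc _
  rw [Real.mul_rpow hc.le ht.le]
  field_simp

lemma aux_contOn (w : ℂ) : ContinuousOn (fun t : ℝ => (t : ℂ) ^ w) (Ioi 0) := by
  apply continuousOn_of_forall_continuousAt
  intro x hx
  exact (continuousAt_cpow_const (ofReal_mem_slitPlane.2 hx)).comp
    continuous_ofReal.continuousAt

lemma aux_meas (s b : ℂ) :
    AEStronglyMeasurable (fun t : ℝ => (t : ℂ) ^ (s - 1) * Complex.exp (-b * t))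
      (volume.restrict (Ioi 0)) :=
  ((aux_contOn (s - 1)).mul (Complex.continuous_exp.comp
    (continuous_const.mul Complex.continuous_ofReal)).continuousOn).aestronglyMeasurable
    measurableSet_Ioi

lemma aux_norm (s b : ℂ) {t : ℝ} (ht : 0 < t) :
    ‖(t : ℂ) ^ (s - 1) * Complex.exp (-b * t)‖ = Real.exp (-(b.re * t)) * t ^ (s.re - 1) := by
  rw [norm_mul,
    Complex.norm_cpow_eq_rpow_re_of_pos ht, Complex.norm_exp]
  have : (-b * (t : ℂ)).re = -(b.re * t) := by simp
  rw [this, Complex.sub_re, Complex.one_re, mul_comm]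

lemma aux_intC {s b : ℂ} (hs : 0 < s.re) (hb : 0 < b.re) :
    IntegrableOn (fun t : ℝ => (t : ℂ) ^ (s - 1) * Complex.exp (-b * t)) (Ioi 0) := by
  refine Integrable.mono' (aux_intR hb hs) (aux_meas s b) ?_
  rw [ae_restrict_iff' measurableSet_Ioi]
  filter_upwards with t ht
  rw [aux_norm s b ht]

lemma aux_gamma_integral {s : ℂ} (hs : 0 < s.re) {b : ℂ} (hb : 0 < b.re) :
    (∫ t : ℝ in Ioi 0, (t : ℂ) ^ (s - 1) * Complex.exp (-b * t))
      = Complex.Gamma s * b ^ (-s) := by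
  set F : ℂ → ℂ := fun b => ∫ t : ℝ in Ioi 0, (t : ℂ) ^ (s - 1) * Complex.exp (-b * t) with hF
  set G : ℂ → ℂ := fun b => Complex.Gamma s * b ^ (-s) with hG
  set U : Set ℂ := {z : ℂ | 0 < z.re} with hU
  have hUo : IsOpen U := isOpen_lt continuous_const Complex.continuous_re
  have hFd : DifferentiableOn ℂ F U := by
    intro b0 hb0
    have hb0' : 0 < b0.re := hb0
    set ε : ℝ := b0.re / 2 with hε
    have hεpos : 0 < ε := by positivity
    have key := hasDerivAt_integral_of_dominated_loc_of_deriv_le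
      (μ := volume.restrict (Ioi 0))
      (F := fun b (t : ℝ) => (t : ℂ) ^ (s - 1) * Complex.exp (-b * t))
      (F' := fun b (t : ℝ) => (t : ℂ) ^ (s - 1) * (Complex.exp (-b * t) * (-(t : ℂ))))
      (x₀ := b0) (bound := fun t => Real.exp (-(ε * t)) * t ^ ((s.re + 1) - 1))
      (Metric.ball_mem_nhds b0 hεpos) (Eventually.of_forall fun b => aux_meas s b) (aux_intC hs hb0')
      ?_ ?_ ?_ ?_
    · exact key.2.differentiableAt.differentiableWithinAt
    · -- measurability of F' b0
      refine (((aux_contOn (s - 1)).mul ((Complex.continuous_exp.comp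
        (continuous_const.mul Complex.continuous_ofReal)).mul
        (Complex.continuous_ofReal.neg)).continuousOn)).aestronglyMeasurable measurableSet_Ioi
    · -- bound
      rw [ae_restrict_iff' measurableSet_Ioi]
      filter_upwards with t ht
      rw [mem_Ioi] at ht
      intro b hbb
      have hbre : ε ≤ b.re := by
        have h1 : |b.re - b0.re| ≤ ‖b - b0‖ := by
          simpa using Complex.abs_re_le_norm (b - b0)
        rw [mem_ball, Complex.dist_eq] at hbb
        have := abs_le.1 h1
        have h2 : b0.re - ε ≤ b.re := by nlinarith [this.1]
        simpa [hε] using h2.trans_eq' (by ring)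
      calc ‖(t : ℂ) ^ (s - 1) * (Complex.exp (-b * t) * (-(t : ℂ)))‖
          = (Real.exp (-(b.re * t)) * t ^ (s.re - 1)) * t := by
            rw [show (t : ℂ) ^ (s - 1) * (Complex.exp (-b * t) * (-(t : ℂ)))
                = ((t : ℂ) ^ (s - 1) * Complex.exp (-b * t)) * (-(t : ℂ)) by ring,
              norm_mul, aux_norm s b ht]
            simp [abs_of_pos ht]
        _ ≤ (Real.exp (-(ε * t)) * t ^ (s.re - 1)) * t := by
            have : Real.exp (-(b.re * t)) ≤ Real.exp (-(ε * t)) := by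
              apply Real.exp_le_exp.2; nlinarith
            have ht1 : (0:ℝ) ≤ t ^ (s.re - 1) := Real.rpow_nonneg ht.le _
            have := mul_le_mul_of_nonneg_right this ht1
            nlinarith
        _ = Real.exp (-(ε * t)) * t ^ ((s.re + 1) - 1) := by
            rw [mul_assoc]
            congr 1
            rw [add_sub_cancel_right, show s.re = (s.re - 1) + 1 by ring,
              Real.rpow_add ht, Real.rpow_one]
            ring_nf
    · exact aux_intR hεpos (by linarith)
    · -- derivative
      rw [ae_restrict_iff' measurableSet_Ioi]
      filter_upwards with t ht
      intro b _
      have h1 : HasDerivAt (fun b : ℂ => -b * (t : ℂ)) (-(t : ℂ)) b := by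
        simpa using ((hasDerivAt_id b).neg.mul_const (t : ℂ))
      exact (h1.cexp).const_mul _
  have hGd : DifferentiableOn ℂ G U := by
    intro b hbU
    exact ((differentiableAt_id.cpow (differentiableAt_const (-s))
      (Or.inl hbU)).const_mul _).differentiableWithinAt
  have hEq : EqOn F G U := by
    apply AnalyticOnNhd.eqOn_of_preconnected_of_mem_closure
      (hFd.analyticOnNhd hUo) (hGd.analyticOnNhd hUo)
      ((convex_halfSpace_re_gt 0).isPreconnected) (z₀ := (2 : ℂ))
      (by norm_num [hU])
    have hsub : (Complex.ofReal '' Ioo 1 2) ⊆ {z : ℂ | F z = G z} \ {(2 : ℂ)} := by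
      rintro z ⟨r, hr, rfl⟩
      obtain ⟨hr1, hr2⟩ := hr
      have hrpos : (0:ℝ) < r := by linarith
      constructor
      · show F r = G r
        have h := integral_cpow_mul_exp_neg_mul_Ioi hs hrpos
        have hFr : F r = (1 / (r:ℂ)) ^ s * Complex.Gamma s := by
          rw [hF, ← h]
          refine setIntegral_congr_fun measurableSet_Ioi fun t _ => ?_
          rw [neg_mul]
        rw [hFr, hG]
        rw [one_div, inv_cpow _ _ (by
          rw [Complex.arg_ofReal_of_nonneg hrpos.le]; exact Real.pi_ne_zero.symm),
          ← cpow_neg, mul_comm]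
      · simp only [mem_singleton_iff]
        intro hcon
        rw [show (2:ℂ) = ((2:ℝ):ℂ) by norm_num] at hcon
        exact absurd (Complex.ofReal_inj.1 hcon) (by linarith)
    have h2 : ((2:ℝ):ℂ) ∈ closure (Complex.ofReal '' Ioo 1 2) := by
      apply mem_closure_image Complex.continuous_ofReal.continuousAt
      rw [closure_Ioo (by norm_num : (1:ℝ) ≠ 2)]
      exact ⟨by norm_num, le_refl _⟩
    have := closure_mono hsub h2
    simpa using this
  exact hEq hb

lemma aux_J {k : ℝ} (hk : 0 < k) :
    (∫ y : ℝ, Complex.exp (Complex.I * (y : ℂ)) / (1 + Complex.I * (y : ℂ)) ^ ((1 + k : ℝ) : ℂ))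
      = ((2 * Real.pi / (Real.Gamma (1 + k) * Real.exp 1) : ℝ) : ℂ) := by
  set s : ℂ := ((1 + k : ℝ) : ℂ) with hs_def
  have hs : 0 < s.re := by simp [hs_def]; linarith
  set f : ℝ → ℂ := fun x => ((Real.exp (-x) * (max x 0) ^ k : ℝ) : ℂ) with hf_def
  have hf_cont : Continuous f := by
    apply Complex.continuous_ofReal.comp
    exact ((Real.continuous_exp.comp continuous_neg).mul
      ((continuous_id.max continuous_const).rpow_const fun x => Or.inr hk.le))
  have hf_zero : ∀ x : ℝ, x ≤ 0 → f x = 0 := by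
    intro x hx
    simp [hf_def, max_eq_right hx, Real.zero_rpow hk.ne']
  have hf_int : Integrable f := by
    have hind : (Ioi (0:ℝ)).indicator f = f :=
      indicator_eq_self.2 (fun x hx => by
        by_contra hcon
        exact hx (hf_zero x (not_lt.1 (by simpa using hcon))))
    rw [← hind, integrable_indicator_iff measurableSet_Ioi]
    have h := (Real.GammaIntegral_convergent (show (0:ℝ) < 1 + k by linarith)).ofReal (𝕜 := ℂ)
    refine IntegrableOn.congr_fun h (fun x hx => ?_) measurableSet_Ioi
    rw [mem_Ioi] at hx
    simp [hf_def, max_eq_left hx.le, add_sub_cancel_left]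
  have hFf : ∀ ξ : ℝ, 𝓕 f ξ = Complex.Gamma s * (1 + ((2 * π * ξ : ℝ) : ℂ) * Complex.I) ^ (-s) := by
    intro ξ
    have hb : (0:ℝ) < (1 + ((2 * π * ξ : ℝ) : ℂ) * Complex.I).re := by simp
    rw [Real.fourier_real_eq_integral_exp_smul]
    have hpt : ∀ v : ℝ, Complex.exp (((-2 * π * v * ξ : ℝ) : ℂ) * Complex.I) • f v
        = (Ioi (0:ℝ)).indicator
            (fun t : ℝ => (t : ℂ) ^ (s - 1) *
              Complex.exp (-(1 + ((2 * π * ξ : ℝ) : ℂ) * Complex.I) * t)) v := by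
      intro v
      rcases le_or_gt v 0 with hv | hv
      · rw [hf_zero v hv, smul_zero, indicator_of_notMem (by simpa using hv)]
      · rw [indicator_of_mem (mem_Ioi.2 hv)]
        have h1 : ((v:ℂ)) ^ (s - 1) = ((v ^ k : ℝ) : ℂ) := by
          rw [show s - 1 = ((k : ℝ) : ℂ) by rw [hs_def]; push_cast; ring,
            Complex.ofReal_cpow hv.le]
        have h2 : Complex.exp (-(1 + ((2 * π * ξ : ℝ) : ℂ) * Complex.I) * v)
            = ((Real.exp (-v) : ℝ) : ℂ) * Complex.exp (((-2 * π * v * ξ : ℝ) : ℂ) * Complex.I) := by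
          rw [Complex.ofReal_exp, ← Complex.exp_add]
          congr 1
          push_cast
          ring
        rw [h1, h2, smul_eq_mul, hf_def]
        simp only [max_eq_left hv.le]
        push_cast
        ring
    simp_rw [hpt]
    rw [integral_indicator measurableSet_Ioi]
    exact aux_gamma_integral hs hb
  have h2pi : (1:ℝ) ≤ 2 * π := by nlinarith [Real.pi_gt_three]
  have hbound : ∀ ξ : ℝ, ‖Complex.Gamma s * (1 + ((2 * π * ξ : ℝ) : ℂ) * Complex.I) ^ (-s)‖
      ≤ ‖Complex.Gamma s‖ * (2 ^ (1 + k) * (1 + ‖ξ‖) ^ (-(1 + k))) := by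
    intro ξ
    set b : ℂ := 1 + ((2 * π * ξ : ℝ) : ℂ) * Complex.I with hb_def
    have hbre : b.re = 1 := by simp [hb_def]
    have hbim : b.im = 2 * π * ξ := by simp [hb_def]
    have hb1 : (1:ℝ) ≤ ‖b‖ := by
      have := Complex.abs_re_le_norm b
      rw [hbre] at this
      simpa using this
    have hb2 : |ξ| ≤ ‖b‖ := by
      have h0 := Complex.abs_im_le_norm b
      rw [hbim, abs_mul] at h0
      have : |ξ| ≤ |2 * π| * |ξ| := le_mul_of_one_le_left (abs_nonneg _) (by
        rw [abs_of_pos (by positivity)]; exact h2pi)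
      linarith
    have hkey : (1 + ‖ξ‖) / 2 ≤ ‖b‖ := by
      rw [Real.norm_eq_abs]; linarith
    have h3 : ‖b ^ (-s)‖ ≤ ‖b‖ ^ (-(1 + k)) := by
      have h := Complex.norm_cpow_le b (-s)
      simpa [hs_def] using h
    have h4 : ‖b‖ ^ (-(1 + k)) ≤ ((1 + ‖ξ‖) / 2) ^ (-(1 + k)) :=
      Real.rpow_le_rpow_of_nonpos (by positivity) hkey (by linarith)
    have h5 : ((1 + ‖ξ‖) / 2) ^ (-(1 + k)) = 2 ^ (1 + k) * (1 + ‖ξ‖) ^ (-(1 + k)) := by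
      rw [Real.div_rpow (by positivity) (by norm_num : (0:ℝ) ≤ 2),
        Real.rpow_neg (by norm_num : (0:ℝ) ≤ 2)]
      field_simp
    rw [norm_mul]
    have := h3.trans (h4.trans_eq h5)
    exact mul_le_mul_of_nonneg_left this (norm_nonneg _)
  have hFint2 : Integrable (𝓕 f) := by
    have hfin : (Module.finrank ℝ ℝ : ℝ) < 1 + k := by
      simp [Module.finrank_self]; linarith
    have hI : Integrable (fun ξ : ℝ =>
        Complex.Gamma s * (1 + ((2 * π * ξ : ℝ) : ℂ) * Complex.I) ^ (-s)) := by
      refine Integrable.mono' (((integrable_one_add_norm (E := ℝ) (μ := volume)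
        hfin).const_mul (2 ^ (1 + k))).const_mul (‖Complex.Gamma s‖)) ?_
        (Eventually.of_forall hbound)
      apply Continuous.aestronglyMeasurable
      apply continuous_const.mul
      apply continuous_iff_continuousAt.2
      intro ξ
      refine (continuousAt_cpow_const (Or.inl (by simp))).comp ?_
      fun_prop
    exact hI.congr (Eventually.of_forall fun ξ => (hFf ξ).symm)
  have hinv : 𝓕⁻ (𝓕 f) 1 = f 1 := MeasureTheory.Integrable.fourierInv_fourier_eq hf_int hFint2 hf_cont.continuousAt
  have hf1 : f 1 = ((Real.exp (-1) : ℝ) : ℂ) := by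
    simp [hf_def, max_eq_left (by norm_num : (0:ℝ) ≤ 1), Real.one_rpow]
  set g : ℝ → ℂ := fun y => Complex.exp (Complex.I * (y : ℂ)) *
    (1 + Complex.I * (y : ℂ)) ^ (-s) with hg_def
  have hinv_eq : 𝓕⁻ (𝓕 f) 1 = Complex.Gamma s * (((2 * π)⁻¹ : ℝ) • ∫ y : ℝ, g y) := by
    rw [Real.fourierInv_eq']
    have hpt2 : ∀ ξ : ℝ, Complex.exp (((2 * π * (inner ℝ ξ (1:ℝ) : ℝ) : ℝ) : ℂ) * Complex.I) • 𝓕 f ξ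
        = Complex.Gamma s • g (2 * π * ξ) := by
      intro ξ
      rw [hFf ξ, smul_eq_mul, smul_eq_mul, hg_def]
      have hin : (inner ℝ ξ (1:ℝ) : ℝ) = ξ := by
        simp [RCLike.inner_apply]
      rw [hin]
      have hbase : (1 + ((2 * π * ξ : ℝ) : ℂ) * Complex.I)
          = 1 + Complex.I * ((2 * π * ξ : ℝ) : ℂ) := by ring
      have hexp : (((2 * π * ξ : ℝ) : ℂ) * Complex.I)
          = Complex.I * ((2 * π * ξ : ℝ) : ℂ) := by ring
      rw [hbase, hexp]
      ring
    simp_rw [hpt2]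
    rw [integral_smul, MeasureTheory.Measure.integral_comp_mul_left g (2 * π),
      abs_of_pos (by positivity : (0:ℝ) < (2 * π)⁻¹), smul_eq_mul]
  have hGamma : Complex.Gamma s = ((Real.Gamma (1 + k) : ℝ) : ℂ) := by
    rw [hs_def, Complex.Gamma_ofReal]
  have hGpos : 0 < Real.Gamma (1 + k) := Real.Gamma_pos_of_pos (by linarith)
  have heq : ((Real.exp (-1) : ℝ) : ℂ)
      = Complex.Gamma s * (((2 * π)⁻¹ : ℝ) • ∫ y : ℝ, g y) := by
    rw [← hinv_eq, hinv, hf1]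
  have hJ : (∫ y : ℝ, g y)
      = ((2 * Real.pi / (Real.Gamma (1 + k) * Real.exp 1) : ℝ) : ℂ) := by
    rw [hGamma, real_smul] at heq
    have hG0 : ((Real.Gamma (1 + k) : ℝ) : ℂ) ≠ 0 := ofReal_ne_zero.2 hGpos.ne'
    have h1 : ((Real.Gamma (1 + k) : ℝ) : ℂ) * ((((2 * π)⁻¹ : ℝ)) : ℂ) ≠ 0 := by
      refine mul_ne_zero hG0 ?_
      rw [ofReal_ne_zero]
      positivity
    have h2 : (∫ y : ℝ, g y) = ((Real.exp (-1) : ℝ) : ℂ) /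
        (((Real.Gamma (1 + k) : ℝ) : ℂ) * ((((2 * π)⁻¹ : ℝ)) : ℂ)) := by
      rw [eq_div_iff h1, heq]
      ring
    rw [h2, ← Complex.ofReal_mul, ← Complex.ofReal_div, Complex.ofReal_inj, Real.exp_neg]
    have hπ : (0:ℝ) < π := Real.pi_pos
    have he : (0:ℝ) < Real.exp 1 := Real.exp_pos 1
    field_simp
  simp_rw [div_eq_mul_inv, ← cpow_neg]
  exact hJ

end aux7

/-- For every `k > 0`: `∫_ℝ e^{iy} K^k(y) dy = 1`, where
`K^k(y) = (Γ(1+k)e/(2π))(1+iy)^{-(1+k)}`; in particular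
`∫_ℝ e^{iy}/(1+iy)^{1+k} dy = 2π/(Γ(1+k)e)`. -/
theorem statement7 (k : ℝ) (hk : 0 < k) :
    (∫ y : ℝ, Complex.exp (Complex.I * (y : ℂ)) *
        (((Real.Gamma (1 + k) * Real.exp 1 / (2 * Real.pi) : ℝ) : ℂ) /
          (1 + Complex.I * (y : ℂ)) ^ ((1 + k : ℝ) : ℂ)) = 1) ∧
    (∫ y : ℝ, Complex.exp (Complex.I * (y : ℂ)) / (1 + Complex.I * (y : ℂ)) ^ ((1 + k : ℝ) : ℂ))
      = ((2 * Real.pi / (Real.Gamma (1 + k) * Real.exp 1) : ℝ) : ℂ) := by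
  constructor
  · have hpt : ∀ y : ℝ, Complex.exp (Complex.I * (y : ℂ)) *
        (((Real.Gamma (1 + k) * Real.exp 1 / (2 * Real.pi) : ℝ) : ℂ) /
          (1 + Complex.I * (y : ℂ)) ^ ((1 + k : ℝ) : ℂ))
        = ((Real.Gamma (1 + k) * Real.exp 1 / (2 * Real.pi) : ℝ) : ℂ) *
          (Complex.exp (Complex.I * (y : ℂ)) /
            (1 + Complex.I * (y : ℂ)) ^ ((1 + k : ℝ) : ℂ)) := by
      intro y
      ring
    simp_rw [hpt]
    rw [integral_const_mul, aux_J hk, ← Complex.ofReal_mul]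
    have hGpos : 0 < Real.Gamma (1 + k) := Real.Gamma_pos_of_pos (by linarith)
    have hπ : (0:ℝ) < Real.pi := Real.pi_pos
    have he : (0:ℝ) < Real.exp 1 := Real.exp_pos 1
    rw [show (Real.Gamma (1 + k) * Real.exp 1 / (2 * Real.pi)) *
        (2 * Real.pi / (Real.Gamma (1 + k) * Real.exp 1)) = 1 by field_simp]
    norm_num
  · exact aux_J hk
end
end

section
/- Let k > ℓ ≥ 0. Then there is a constant C(k,ℓ) > 0 such that for every x > 1 and every y ∈ ℝ the kernel R^{k,ℓ}(x,y) satisfies: |R^{k,ℓ}(x,y)| ≤ C(k,ℓ) · x/|1 + iyx|^{1+k−ℓ} if k < 1; |R^{k,ℓ}(x,y)| ≤ C(k,ℓ) · (x/|1 + iyx|² + x/|1 + iyx|^{1+k−ℓ}) if k ≥ 1 and k − ℓ < 1; and |R^{k,ℓ}(x,y)| ≤ C(k,ℓ) · x/|1 + iyx|² if k ≥ 1 and k − ℓ ≥ 1. -/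
open Complex MeasureTheory Filter Topology Set
open scoped Classical

noncomputable section

namespace Statement11Aux

/-- normalized Cauchy density -/
def p0 (u : ℝ) : ℝ := (Real.pi)⁻¹ * (1 + u ^ 2)⁻¹

lemma p0_nonneg (u : ℝ) : 0 ≤ p0 u := by
  have := Real.pi_pos
  unfold p0; positivity

lemma p0_integrable : Integrable p0 := integrable_inv_one_add_sq.const_mul _

lemma p0_integral : ∫ u : ℝ, p0 u = 1 := by
  unfold p0
  rw [MeasureTheory.integral_const_mul, integral_univ_inv_one_add_sq,
    inv_mul_cancel₀ Real.pi_ne_zero]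

lemma p0_comp_integrable {a : ℝ} (ha : a ≠ 0) (b : ℝ) :
    Integrable (fun t : ℝ => p0 (a * t - b)) :=
  (p0_integrable.comp_sub_right b).comp_mul_left' ha

lemma p0_comp_integral {a : ℝ} (ha : 0 < a) (b : ℝ) :
    ∫ t : ℝ, p0 (a * t - b) = a⁻¹ := by
  have h1 : (fun t : ℝ => p0 (a * t - b)) = fun t => (fun s => p0 (s - b)) (a * t) := rfl
  rw [h1, MeasureTheory.Measure.integral_comp_mul_left (fun s => p0 (s - b)) a,
    integral_sub_right_eq_self p0 b, p0_integral, smul_eq_mul, mul_one,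
    abs_of_pos (inv_pos.2 ha)]

lemma brk_integrable {q : ℝ} (hq : 1 < q) :
    Integrable (fun u : ℝ => (1 + |u|) ^ (-q)) := by
  have h : ((Module.finrank ℝ ℝ : ℕ) : ℝ) < q := by
    rw [Module.finrank_self]; exact_mod_cast hq
  simpa [Real.norm_eq_abs] using integrable_one_add_norm (E := ℝ) (μ := volume) h

lemma brk_comp_integrable {q x : ℝ} (hq : 1 < q) (hx : 0 < x) :
    Integrable (fun t : ℝ => (1 + x * |t|) ^ (-q)) := by
  have h := (brk_integrable hq).comp_mul_left' hx.ne'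
  simpa [abs_mul, abs_of_pos hx] using h

lemma brk_comp_integral {q x : ℝ} (hx : 0 < x) :
    ∫ t : ℝ, (1 + x * |t|) ^ (-q) = x⁻¹ * ∫ u : ℝ, (1 + |u|) ^ (-q) := by
  have h1 : (fun t : ℝ => (1 + x * |t|) ^ (-q))
      = fun t => (fun u : ℝ => (1 + |u|) ^ (-q)) (x * t) := by
    funext t; simp [abs_mul, abs_of_pos hx]
  rw [h1, MeasureTheory.Measure.integral_comp_mul_left (fun u : ℝ => (1 + |u|) ^ (-q)) x, smul_eq_mul,
    abs_of_pos (inv_pos.2 hx)]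

lemma poisson_eq {x : ℝ} (hx : 0 < x) (y t : ℝ) :
    poisson x⁻¹ (t - y) = x * p0 (x * t - x * y) := by
  have hπ := Real.pi_ne_zero
  have hx' := hx.ne'
  have h : x * t - x * y = x * (t - y) := by ring
  have d1 : (x⁻¹) ^ 2 + (t - y) ^ 2 ≠ 0 := by positivity
  have d2 : 1 + (x * (t - y)) ^ 2 ≠ 0 := by positivity
  unfold poisson p0
  rw [h]
  field_simp

end Statement11Aux

namespace Statement11Aux

set_option maxHeartbeats 2000000 in
lemma key (k l : ℝ) (hl : 0 ≤ l) (hk : l < k) :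
    ∃ C : ℝ, 0 < C ∧ ∀ x : ℝ, 1 < x → ∀ y : ℝ,
      ‖Rker k l x y‖ ≤
        C * (x / ‖1 + Complex.I * (y : ℂ) * (x : ℂ)‖ ^ (1 + k - l)
           + x / ‖1 + Complex.I * (y : ℂ) * (x : ℂ)‖ ^ (2 : ℝ)) := by
  have hπ := Real.pi_pos
  set q : ℝ := 1 + k - l with hqdef
  have hq : 1 < q := by rw [hqdef]; linarith
  have hq0 : 0 ≤ q := by linarith
  set c1 : ℝ := Real.Gamma (1 + k) * Real.exp 1 / (2 * Real.pi) with hc1def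
  have hc1 : 0 < c1 := by
    have hg : 0 < Real.Gamma (1 + k) := Real.Gamma_pos_of_pos (by linarith)
    have he : 0 < Real.exp 1 := Real.exp_pos 1
    rw [hc1def]; positivity
  set c2 : ℝ := 2 ^ l * 2 ^ (1 + k) * c1 with hc2def
  have hc2 : 0 < c2 := by
    rw [hc2def]
    have h1 : (0:ℝ) < 2 ^ l := Real.rpow_pos_of_pos (by norm_num) l
    have h2 : (0:ℝ) < 2 ^ (1 + k) := Real.rpow_pos_of_pos (by norm_num) (1 + k)
    positivity
  set Jq : ℝ := ∫ u : ℝ, (1 + |u|) ^ (-q) with hJqdef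
  have hJq : 0 ≤ Jq := by
    rw [hJqdef]; exact integral_nonneg fun u => Real.rpow_nonneg (by positivity) _
  have h2q : (0:ℝ) < 2 ^ q := Real.rpow_pos_of_pos (by norm_num) q
  set C1 : ℝ := c2 * 2 ^ q + 16 * c2 * Jq / Real.pi + 1 with hC1def
  have hC1 : 0 < C1 := by rw [hC1def]; positivity
  have hC1a : c2 * 2 ^ q ≤ C1 := by
    have h9 : (0:ℝ) ≤ 16 * c2 * Jq / Real.pi := by positivity
    rw [hC1def]; linarith
  have hC1b : 16 * c2 * Jq / Real.pi ≤ C1 := by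
    have h9 : (0:ℝ) ≤ c2 * 2 ^ q := by positivity
    rw [hC1def]; linarith
  refine ⟨C1, hC1, fun x hx y => ?_⟩
  have hx0 : (0:ℝ) < x := by linarith
  have hx1 : (1:ℝ) ≤ x := hx.le
  set A : ℝ := ‖1 + Complex.I * (y : ℂ) * (x : ℂ)‖ with hAdef
  have hApos : 0 < A := by
    rw [hAdef]
    apply norm_pos_iff.mpr
    intro h
    have := congrArg Complex.re h
    simp at this
  have hA1 : 1 ≤ A := by
    have h1 : (1 + Complex.I * (y : ℂ) * (x : ℂ)).re = 1 := by simp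
    have h2 := Complex.abs_re_le_norm (1 + Complex.I * (y : ℂ) * (x : ℂ))
    rw [h1] at h2
    simpa [hAdef] using le_trans (by norm_num) h2
  have hAA' : A ≤ 1 + x * |y| := by
    rw [hAdef]
    calc ‖1 + Complex.I * (y : ℂ) * (x : ℂ)‖
        ≤ ‖(1:ℂ)‖ + ‖Complex.I * (y : ℂ) * (x : ℂ)‖ :=
          norm_add_le _ _
      _ = 1 + x * |y| := by
          rw [norm_one, norm_mul, norm_mul, Complex.norm_I, Complex.norm_real, Complex.norm_real,
            Real.norm_eq_abs, Real.norm_eq_abs, abs_of_pos hx0]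
          ring
  have hA'pos : (0:ℝ) < 1 + x * |y| := by positivity
  have hAq : (0:ℝ) < A ^ q := Real.rpow_pos_of_pos hApos q
  have hA2 : (0:ℝ) < A ^ (2:ℝ) := Real.rpow_pos_of_pos hApos 2
  -- the pointwise bound
  have hpt : ∀ t : ℝ,
      ‖((poisson x⁻¹ (t - y) : ℝ) : ℂ) * Complex.exp (Complex.I * (t : ℂ) * (x : ℂ)) *
        (1 + ((x⁻¹ : ℝ) : ℂ) + Complex.I * (t : ℂ)) ^ ((l : ℝ) : ℂ) * Kker k x t‖
      ≤ c2 * x * (x * p0 (x * t - x * y)) * (1 + x * |t|) ^ (-q) := by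
    intro t
    have hB : (0:ℝ) < 1 + x * |t| := by positivity
    have ha : ‖((poisson x⁻¹ (t - y) : ℝ) : ℂ)‖ = x * p0 (x * t - x * y) := by
      rw [Complex.norm_real, Real.norm_eq_abs, poisson_eq hx0,
        _root_.abs_of_nonneg (mul_nonneg hx0.le (p0_nonneg _))]
    have hb : ‖Complex.exp (Complex.I * (t : ℂ) * (x : ℂ))‖ = 1 := by
      rw [Complex.norm_exp]
      simp
    have hc : ‖(1 + ((x⁻¹ : ℝ) : ℂ) + Complex.I * (t : ℂ)) ^ ((l : ℝ) : ℂ)‖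
        ≤ 2 ^ l * (1 + x * |t|) ^ l := by
      have hz : (1 + ((x⁻¹ : ℝ) : ℂ) + Complex.I * (t : ℂ)) ≠ 0 := by
        intro h
        have h' := congrArg Complex.re h
        simp at h'
        nlinarith [inv_pos.2 hx0]
      rw [Complex.norm_cpow_of_ne_zero hz]
      simp only [Complex.ofReal_re, Complex.ofReal_im, mul_zero, Real.exp_zero, div_one]
      have hzb : ‖1 + ((x⁻¹ : ℝ) : ℂ) + Complex.I * (t : ℂ)‖
          ≤ 2 * (1 + x * |t|) := by
        calc ‖1 + ((x⁻¹ : ℝ) : ℂ) + Complex.I * (t : ℂ)‖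
            ≤ ‖1 + ((x⁻¹ : ℝ) : ℂ)‖ + ‖Complex.I * (t : ℂ)‖ :=
              norm_add_le _ _
          _ = (1 + x⁻¹) + |t| := by
              have h1 : (1 + ((x⁻¹ : ℝ) : ℂ)) = (((1 + x⁻¹ : ℝ)) : ℂ) := by push_cast; ring
              rw [h1, Complex.norm_real, Real.norm_eq_abs, abs_of_pos (by positivity)]
              simp
          _ ≤ 2 * (1 + x * |t|) := by
              have h2 : x⁻¹ ≤ 1 := by
                rw [inv_le_one_iff₀]; right; exact hx1
              have h3 : |t| ≤ x * |t| := le_mul_of_one_le_left (abs_nonneg t) hx1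
              nlinarith [abs_nonneg t]
      calc ‖1 + ((x⁻¹ : ℝ) : ℂ) + Complex.I * (t : ℂ)‖ ^ l
          ≤ (2 * (1 + x * |t|)) ^ l := Real.rpow_le_rpow (norm_nonneg _) hzb hl
        _ = 2 ^ l * (1 + x * |t|) ^ l := Real.mul_rpow (by norm_num) hB.le
    have hd : ‖Kker k x t‖ ≤ c1 * 2 ^ (1 + k) * x * (1 + x * |t|) ^ (-(1 + k)) := by
      have hz2 : (1 + Complex.I * (x : ℂ) * (t : ℂ)) ≠ 0 := by
        intro h
        have h' := congrArg Complex.re h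
        simp at h'
      have hre : (1 + Complex.I * (x : ℂ) * (t : ℂ)).re = 1 := by simp
      have him : (1 + Complex.I * (x : ℂ) * (t : ℂ)).im = x * t := by simp
      have habs1 : (1:ℝ) ≤ ‖1 + Complex.I * (x : ℂ) * (t : ℂ)‖ := by
        have h2 := Complex.abs_re_le_norm (1 + Complex.I * (x : ℂ) * (t : ℂ))
        rw [hre] at h2; simpa using le_trans (by norm_num) h2
      have habs2 : x * |t| ≤ ‖1 + Complex.I * (x : ℂ) * (t : ℂ)‖ := by
        have h2 := Complex.abs_im_le_norm (1 + Complex.I * (x : ℂ) * (t : ℂ))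
        rw [him] at h2
        calc x * |t| = |x * t| := by rw [abs_mul, abs_of_pos hx0]
          _ ≤ _ := h2
      have hup : (1 + x * |t|) / 2 ≤ ‖1 + Complex.I * (x : ℂ) * (t : ℂ)‖ := by
        linarith
      have hD : ((1 + x * |t|) / 2) ^ (1 + k)
          ≤ ‖1 + Complex.I * (x : ℂ) * (t : ℂ)‖ ^ (1 + k) :=
        Real.rpow_le_rpow (by positivity) hup (by linarith)
      have h2k : (0:ℝ) < 2 ^ (1 + k) := Real.rpow_pos_of_pos (by norm_num) _
      have hBk : (0:ℝ) < (1 + x * |t|) ^ (1 + k) := Real.rpow_pos_of_pos hB _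
      unfold Kker
      rw [norm_div, norm_mul, Complex.norm_real, Real.norm_eq_abs, Complex.norm_real, Real.norm_eq_abs,
        Complex.norm_cpow_of_ne_zero hz2]
      simp only [Complex.ofReal_re, Complex.ofReal_im, mul_zero, Real.exp_zero, div_one]
      rw [abs_of_pos hc1, abs_of_pos hx0]
      calc c1 * x / ‖1 + Complex.I * (x : ℂ) * (t : ℂ)‖ ^ (1 + k)
          ≤ c1 * x / (((1 + x * |t|) / 2) ^ (1 + k)) := by
            gcongr <;> first | exact Real.rpow_pos_of_pos (by positivity) _ | exact hD
        _ = c1 * 2 ^ (1 + k) * x * (1 + x * |t|) ^ (-(1 + k)) := by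
            rw [Real.div_rpow hB.le (by norm_num : (0:ℝ) ≤ 2), Real.rpow_neg hB.le]
            field_simp
    calc ‖((poisson x⁻¹ (t - y) : ℝ) : ℂ) * Complex.exp (Complex.I * (t : ℂ) * (x : ℂ)) *
          (1 + ((x⁻¹ : ℝ) : ℂ) + Complex.I * (t : ℂ)) ^ ((l : ℝ) : ℂ) * Kker k x t‖
        = ‖((poisson x⁻¹ (t - y) : ℝ) : ℂ)‖ * ‖Complex.exp (Complex.I * (t : ℂ) * (x : ℂ))‖ *
          ‖(1 + ((x⁻¹ : ℝ) : ℂ) + Complex.I * (t : ℂ)) ^ ((l : ℝ) : ℂ)‖ * ‖Kker k x t‖ := by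
          rw [norm_mul, norm_mul, norm_mul]
      _ = (x * p0 (x * t - x * y)) *
          (‖(1 + ((x⁻¹ : ℝ) : ℂ) + Complex.I * (t : ℂ)) ^ ((l : ℝ) : ℂ)‖ * ‖Kker k x t‖) := by
          rw [ha, hb]; ring
      _ ≤ (x * p0 (x * t - x * y)) *
          ((2 ^ l * (1 + x * |t|) ^ l) * (c1 * 2 ^ (1 + k) * x * (1 + x * |t|) ^ (-(1 + k)))) := by
          refine mul_le_mul_of_nonneg_left ?_ (mul_nonneg hx0.le (p0_nonneg _))
          exact mul_le_mul hc hd (norm_nonneg _) (by positivity)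
      _ = c2 * x * (x * p0 (x * t - x * y)) * (1 + x * |t|) ^ (-q) := by
          rw [show -q = l + (-(1 + k)) by rw [hqdef]; ring, Real.rpow_add hB, hc2def]
          ring
  -- bound |Rker| by the integral of norms
  have hRle : ‖Rker k l x y‖
      ≤ ∫ t : ℝ, ‖((poisson x⁻¹ (t - y) : ℝ) : ℂ) *
          Complex.exp (Complex.I * (t : ℂ) * (x : ℂ)) *
          (1 + ((x⁻¹ : ℝ) : ℂ) + Complex.I * (t : ℂ)) ^ ((l : ℝ) : ℂ) * Kker k x t‖ := by
    exact norm_integral_le_integral_norm _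
  rcases le_or_gt (x * |y|) 1 with hsmall | hbig
  · -- small case : x * |y| ≤ 1
    have hIle : (∫ t : ℝ, ‖((poisson x⁻¹ (t - y) : ℝ) : ℂ) *
          Complex.exp (Complex.I * (t : ℂ) * (x : ℂ)) *
          (1 + ((x⁻¹ : ℝ) : ℂ) + Complex.I * (t : ℂ)) ^ ((l : ℝ) : ℂ) * Kker k x t‖)
        ≤ ∫ t : ℝ, (c2 * x) * (x * p0 (x * t - x * y)) := by
      refine integral_mono_of_nonneg (ae_of_all _ fun t => norm_nonneg _)
        (((p0_comp_integrable hx0.ne' (x * y)).const_mul x).const_mul (c2 * x))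
        (ae_of_all _ fun t => ?_)
      refine (hpt t).trans ?_
      have hB : (0:ℝ) < 1 + x * |t| := by positivity
      have h1 : (1 + x * |t|) ^ (-q) ≤ 1 :=
        Real.rpow_le_one_of_one_le_of_nonpos (by nlinarith [abs_nonneg t]) (by linarith)
      calc c2 * x * (x * p0 (x * t - x * y)) * (1 + x * |t|) ^ (-q)
          ≤ c2 * x * (x * p0 (x * t - x * y)) * 1 :=
            mul_le_mul_of_nonneg_left h1
              (mul_nonneg (mul_nonneg hc2.le hx0.le) (mul_nonneg hx0.le (p0_nonneg _)))
        _ = (c2 * x) * (x * p0 (x * t - x * y)) := by ring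
    have hIval : (∫ t : ℝ, (c2 * x) * (x * p0 (x * t - x * y))) = c2 * x := by
      rw [MeasureTheory.integral_const_mul, MeasureTheory.integral_const_mul,
        p0_comp_integral hx0, mul_inv_cancel₀ hx0.ne']
      ring
    have hfin : c2 * x ≤ C1 * (x / A ^ q + x / A ^ (2:ℝ)) := by
      have hA2' : A ≤ 2 := hAA'.trans (by linarith)
      have hAq2 : A ^ q ≤ 2 ^ q := Real.rpow_le_rpow hApos.le hA2' hq0
      have h2 : x / 2 ^ q ≤ x / A ^ q := by gcongr
      have h3 : c2 * x = (c2 * 2 ^ q) * (x / 2 ^ q) := by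
        field_simp
      calc c2 * x = (c2 * 2 ^ q) * (x / 2 ^ q) := h3
        _ ≤ (c2 * 2 ^ q) * (x / A ^ q) :=
            mul_le_mul_of_nonneg_left h2 (mul_nonneg hc2.le h2q.le)
        _ ≤ C1 * (x / A ^ q) := mul_le_mul_of_nonneg_right hC1a (by positivity)
        _ ≤ C1 * (x / A ^ q + x / A ^ (2:ℝ)) := by
            have h9 : (0:ℝ) ≤ x / A ^ (2:ℝ) := by positivity
            exact mul_le_mul_of_nonneg_left (le_add_of_nonneg_right h9) hC1.le
    exact hRle.trans ((hIle.trans (le_of_eq hIval)).trans hfin)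
  · -- big case : 1 < x * |y|
    have hy0 : y ≠ 0 := by
      intro h; rw [h] at hbig; simp at hbig; linarith
    have hy2 : (0:ℝ) < y ^ 2 := by positivity
    set A' : ℝ := 1 + x * |y| with hA'def
    have hG1 : ∀ t : ℝ, c2 * x * (x * p0 (x * t - x * y)) * (1 + x * |t|) ^ (-q)
        ≤ c2 * x * (2 / A') ^ q * (x * p0 (x * t - x * y))
          + (4 * c2 / (Real.pi * y ^ 2)) * (1 + x * |t|) ^ (-q) := by
      intro t
      have hB : (0:ℝ) < 1 + x * |t| := by positivity
      rcases le_or_gt (|t - y|) (|y| / 2) with hnear | hfar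
      · have ht : |y| / 2 ≤ |t| := by
          have h1 : |y| - |t| ≤ |y - t| := abs_sub_abs_le_abs_sub y t
          have h2 : |y - t| = |t - y| := abs_sub_comm y t
          linarith
        have hBA : A' / 2 ≤ 1 + x * |t| := by
          have h3 : x * (|y| / 2) ≤ x * |t| := mul_le_mul_of_nonneg_left ht hx0.le
          rw [hA'def]; linarith
        have hBb : (1 + x * |t|) ^ (-q) ≤ (A' / 2) ^ (-q) :=
          Real.rpow_le_rpow_of_nonpos (by positivity) hBA (by linarith)
        have heq : (A' / 2) ^ (-q) = (2 / A') ^ q := by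
          rw [Real.rpow_neg (by positivity), ← Real.inv_rpow (by positivity), inv_div]
        have hstep : c2 * x * (x * p0 (x * t - x * y)) * (1 + x * |t|) ^ (-q)
            ≤ c2 * x * (2 / A') ^ q * (x * p0 (x * t - x * y)) := by
          calc c2 * x * (x * p0 (x * t - x * y)) * (1 + x * |t|) ^ (-q)
              ≤ c2 * x * (x * p0 (x * t - x * y)) * (2 / A') ^ q :=
                mul_le_mul_of_nonneg_left (hBb.trans_eq heq)
                  (mul_nonneg (mul_nonneg hc2.le hx0.le) (mul_nonneg hx0.le (p0_nonneg _)))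
            _ = c2 * x * (2 / A') ^ q * (x * p0 (x * t - x * y)) := by ring
        refine hstep.trans (le_add_of_nonneg_right ?_)
        exact mul_nonneg (by positivity) (Real.rpow_nonneg hB.le _)
      · have hp : x * p0 (x * t - x * y) ≤ 4 / (Real.pi * x * y ^ 2) := by
          have h1 : x * t - x * y = x * (t - y) := by ring
          have h2 : (|y| / 2) ^ 2 ≤ |t - y| ^ 2 := by
            apply pow_le_pow_left₀ (by positivity) hfar.le
          have h2' : y ^ 2 / 4 ≤ (t - y) ^ 2 := by
            rw [div_pow, _root_.sq_abs, _root_.sq_abs] at h2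
            linarith
          have hD : 0 < 1 + (x * (t - y)) ^ 2 := by positivity
          unfold p0
          rw [h1]
          rw [show x * (Real.pi⁻¹ * (1 + (x * (t - y)) ^ 2)⁻¹)
              = x / (Real.pi * (1 + (x * (t - y)) ^ 2)) by field_simp]
          rw [div_le_div_iff₀ (by positivity) (by positivity)]
          nlinarith [mul_le_mul_of_nonneg_left h2' (mul_nonneg (mul_nonneg hπ.le hx0.le) (mul_nonneg hx0.le hx0.le)), sq_nonneg (x * (t - y)), mul_pos hπ hx0]
        have hstep : c2 * x * (x * p0 (x * t - x * y)) * (1 + x * |t|) ^ (-q)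
            ≤ (4 * c2 / (Real.pi * y ^ 2)) * (1 + x * |t|) ^ (-q) := by
          have h4 : c2 * x * (x * p0 (x * t - x * y)) ≤ c2 * x * (4 / (Real.pi * x * y ^ 2)) :=
            mul_le_mul_of_nonneg_left hp (mul_nonneg hc2.le hx0.le)
          have h5 : c2 * x * (4 / (Real.pi * x * y ^ 2)) = 4 * c2 / (Real.pi * y ^ 2) := by
            field_simp
          calc c2 * x * (x * p0 (x * t - x * y)) * (1 + x * |t|) ^ (-q)
              ≤ (c2 * x * (4 / (Real.pi * x * y ^ 2))) * (1 + x * |t|) ^ (-q) :=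
                mul_le_mul_of_nonneg_right h4 (Real.rpow_nonneg hB.le _)
            _ = (4 * c2 / (Real.pi * y ^ 2)) * (1 + x * |t|) ^ (-q) := by rw [h5]
        refine hstep.trans (le_add_of_nonneg_left ?_)
        exact mul_nonneg (mul_nonneg (mul_nonneg hc2.le hx0.le) (Real.rpow_nonneg (by positivity) _)) (mul_nonneg hx0.le (p0_nonneg _))
    have hGint : Integrable (fun t : ℝ =>
        c2 * x * (2 / A') ^ q * (x * p0 (x * t - x * y))
          + (4 * c2 / (Real.pi * y ^ 2)) * (1 + x * |t|) ^ (-q)) :=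
      (((p0_comp_integrable hx0.ne' (x * y)).const_mul x).const_mul _).add
        ((brk_comp_integrable hq hx0).const_mul _)
    have hIle : (∫ t : ℝ, ‖((poisson x⁻¹ (t - y) : ℝ) : ℂ) *
          Complex.exp (Complex.I * (t : ℂ) * (x : ℂ)) *
          (1 + ((x⁻¹ : ℝ) : ℂ) + Complex.I * (t : ℂ)) ^ ((l : ℝ) : ℂ) * Kker k x t‖)
        ≤ ∫ t : ℝ, (c2 * x * (2 / A') ^ q * (x * p0 (x * t - x * y))
          + (4 * c2 / (Real.pi * y ^ 2)) * (1 + x * |t|) ^ (-q)) :=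
      integral_mono_of_nonneg (ae_of_all _ fun t => norm_nonneg _) hGint
        (ae_of_all _ fun t => (hpt t).trans (hG1 t))
    have hIval : (∫ t : ℝ, (c2 * x * (2 / A') ^ q * (x * p0 (x * t - x * y))
          + (4 * c2 / (Real.pi * y ^ 2)) * (1 + x * |t|) ^ (-q)))
        = c2 * x * (2 / A') ^ q + (4 * c2 / (Real.pi * y ^ 2)) * (x⁻¹ * Jq) := by
      rw [integral_add (((p0_comp_integrable hx0.ne' (x * y)).const_mul x).const_mul _)
        ((brk_comp_integrable hq hx0).const_mul _),
        MeasureTheory.integral_const_mul, MeasureTheory.integral_const_mul,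
        MeasureTheory.integral_const_mul, p0_comp_integral hx0, brk_comp_integral hx0,
        mul_inv_cancel₀ hx0.ne', mul_one, hJqdef]
    have hfin : c2 * x * (2 / A') ^ q + (4 * c2 / (Real.pi * y ^ 2)) * (x⁻¹ * Jq)
        ≤ C1 * (x / A ^ q + x / A ^ (2:ℝ)) := by
      have hterm1 : c2 * x * (2 / A') ^ q ≤ (c2 * 2 ^ q) * (x / A ^ q) := by
        have h1 : (2 / A') ≤ 2 / A := by gcongr
        have h2 : (2 / A') ^ q ≤ (2 / A) ^ q :=
          Real.rpow_le_rpow (by positivity) h1 hq0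
        have h3 : (2 / A) ^ q = 2 ^ q / A ^ q :=
          Real.div_rpow (by norm_num) hApos.le q
        calc c2 * x * (2 / A') ^ q ≤ c2 * x * (2 ^ q / A ^ q) := by
              refine mul_le_mul_of_nonneg_left (h2.trans_eq h3)
                (mul_nonneg hc2.le hx0.le)
          _ = (c2 * 2 ^ q) * (x / A ^ q) := by ring
      have hterm2 : (4 * c2 / (Real.pi * y ^ 2)) * (x⁻¹ * Jq)
          ≤ (16 * c2 * Jq / Real.pi) * (x / A ^ (2:ℝ)) := by
        have hA2b : A ^ (2:ℝ) ≤ 4 * x ^ 2 * y ^ 2 := by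
          have h5 : A ≤ 2 * (x * |y|) := by
            have : (1:ℝ) ≤ x * |y| := hbig.le
            linarith [hAA']
          have h6 : A ^ (2:ℝ) = A ^ (2:ℕ) := by
            rw [show ((2:ℝ) = ((2:ℕ):ℝ)) by norm_num, Real.rpow_natCast]
          rw [h6]
          calc A ^ (2:ℕ) ≤ (2 * (x * |y|)) ^ (2:ℕ) := pow_le_pow_left₀ hApos.le h5 2
            _ = 4 * x ^ 2 * y ^ 2 := by
              rw [mul_pow, mul_pow, _root_.sq_abs]; ring
        have h7 : (1:ℝ) / (x * y ^ 2) ≤ 4 * (x / A ^ (2:ℝ)) := by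
          rw [show 4 * (x / A ^ (2:ℝ)) = (4 * x) / A ^ (2:ℝ) by ring,
            div_le_div_iff₀ (by positivity) hA2]
          calc 1 * A ^ (2:ℝ) ≤ 4 * x ^ 2 * y ^ 2 := by rw [one_mul]; exact hA2b
            _ = 4 * x * (x * y ^ 2) := by ring
        have h8 : (4 * c2 / (Real.pi * y ^ 2)) * (x⁻¹ * Jq)
            = (4 * c2 * Jq / Real.pi) * (1 / (x * y ^ 2)) := by
          ring
        rw [h8]
        calc (4 * c2 * Jq / Real.pi) * (1 / (x * y ^ 2))
            ≤ (4 * c2 * Jq / Real.pi) * (4 * (x / A ^ (2:ℝ))) :=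
              mul_le_mul_of_nonneg_left h7 (by positivity)
          _ = (16 * c2 * Jq / Real.pi) * (x / A ^ (2:ℝ)) := by ring
      calc c2 * x * (2 / A') ^ q + (4 * c2 / (Real.pi * y ^ 2)) * (x⁻¹ * Jq)
          ≤ (c2 * 2 ^ q) * (x / A ^ q) + (16 * c2 * Jq / Real.pi) * (x / A ^ (2:ℝ)) :=
            add_le_add hterm1 hterm2
        _ ≤ C1 * (x / A ^ q) + C1 * (x / A ^ (2:ℝ)) :=
            add_le_add (mul_le_mul_of_nonneg_right hC1a (by positivity))
              (mul_le_mul_of_nonneg_right hC1b (by positivity))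
        _ = C1 * (x / A ^ q + x / A ^ (2:ℝ)) := by ring
    exact hRle.trans ((hIle.trans (le_of_eq hIval)).trans hfin)

end Statement11Aux


set_option maxHeartbeats 1000000 in
/-- (Kernel estimates.) For `k > ℓ ≥ 0` there is `C(k,ℓ) > 0` such that for
all `x > 1` and `y ∈ ℝ` the kernel `R^{k,ℓ}(x,y)` satisfies the stated case distinction. -/
theorem statement11 (k l : ℝ) (hl : 0 ≤ l) (hk : l < k) :
    ∃ C : ℝ, 0 < C ∧ ∀ x : ℝ, 1 < x → ∀ y : ℝ,
      (k < 1 →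
        ‖Rker k l x y‖
          ≤ C * x / ‖1 + Complex.I * (y : ℂ) * (x : ℂ)‖ ^ (1 + k - l)) ∧
      (1 ≤ k → k - l < 1 →
        ‖Rker k l x y‖
          ≤ C * (x / ‖1 + Complex.I * (y : ℂ) * (x : ℂ)‖ ^ (2 : ℝ)
              + x / ‖1 + Complex.I * (y : ℂ) * (x : ℂ)‖ ^ (1 + k - l))) ∧
      (1 ≤ k → 1 ≤ k - l →
        ‖Rker k l x y‖
          ≤ C * x / ‖1 + Complex.I * (y : ℂ) * (x : ℂ)‖ ^ (2 : ℝ)) := by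
  obtain ⟨C1, hC1, hkey⟩ := Statement11Aux.key k l hl hk
  refine ⟨2 * C1, by positivity, fun x hx y => ?_⟩
  have hx0 : (0:ℝ) < x := by linarith
  set A : ℝ := ‖1 + Complex.I * (y : ℂ) * (x : ℂ)‖ with hAdef
  have hApos : 0 < A := by
    rw [hAdef]
    apply norm_pos_iff.mpr
    intro h
    have := congrArg Complex.re h
    simp at this
  have hA1 : 1 ≤ A := by
    have h1 : (1 + Complex.I * (y : ℂ) * (x : ℂ)).re = 1 := by simp
    have h2 := Complex.abs_re_le_norm (1 + Complex.I * (y : ℂ) * (x : ℂ))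
    rw [h1] at h2
    simpa [hAdef] using le_trans (by norm_num) h2
  have hAq : (0:ℝ) < A ^ (1 + k - l) := Real.rpow_pos_of_pos hApos _
  have hA2 : (0:ℝ) < A ^ (2:ℝ) := Real.rpow_pos_of_pos hApos _
  have hmain := hkey x hx y
  refine ⟨fun hk1 => ?_, fun _ _ => ?_, fun _ hkl => ?_⟩
  · -- k < 1 : 1 + k - l ≤ 2
    have hle : A ^ (1 + k - l) ≤ A ^ (2:ℝ) :=
      Real.rpow_le_rpow_of_exponent_le hA1 (by linarith)
    have h2 : x / A ^ (2:ℝ) ≤ x / A ^ (1 + k - l) := by gcongr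
    calc ‖Rker k l x y‖ ≤ C1 * (x / A ^ (1 + k - l) + x / A ^ (2:ℝ)) := hmain
      _ ≤ C1 * (x / A ^ (1 + k - l) + x / A ^ (1 + k - l)) := by
          refine mul_le_mul_of_nonneg_left (by linarith) hC1.le
      _ = 2 * C1 * x / A ^ (1 + k - l) := by ring
  · -- middle case
    calc ‖Rker k l x y‖ ≤ C1 * (x / A ^ (1 + k - l) + x / A ^ (2:ℝ)) := hmain
      _ ≤ 2 * C1 * (x / A ^ (2:ℝ) + x / A ^ (1 + k - l)) := by
          have h1 : (0:ℝ) ≤ x / A ^ (1 + k - l) := by positivity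
          have h2 : (0:ℝ) ≤ x / A ^ (2:ℝ) := by positivity
          nlinarith
  · -- k - l ≥ 1 : 2 ≤ 1 + k - l
    have hle : A ^ (2:ℝ) ≤ A ^ (1 + k - l) :=
      Real.rpow_le_rpow_of_exponent_le hA1 (by linarith)
    have h2 : x / A ^ (1 + k - l) ≤ x / A ^ (2:ℝ) := by gcongr
    calc ‖Rker k l x y‖ ≤ C1 * (x / A ^ (1 + k - l) + x / A ^ (2:ℝ)) := hmain
      _ ≤ C1 * (x / A ^ (2:ℝ) + x / A ^ (2:ℝ)) := by
          refine mul_le_mul_of_nonneg_left (by linarith) hC1.le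
      _ = 2 * C1 * x / A ^ (2:ℝ) := by ring
end
end

section
/- Let k > ℓ ≥ 0. Then for every δ > 0, lim_{x→∞} ∫_{{y ∈ ℝ : |y| > δ}} |R^{k,ℓ}(x,y)| dy = 0. -/
open Complex MeasureTheory Filter Topology Set
open scoped Classical

noncomputable section

namespace St12

lemma poisson_nonneg {u : ℝ} (hu : 0 ≤ u) (t : ℝ) : 0 ≤ poisson u t := by
  unfold poisson
  apply div_nonneg (by positivity) (by positivity)

lemma poisson_le {u c s : ℝ} (hu : 0 < u) (hc : 0 < c) (hs : c ≤ u ^ 2 + s ^ 2) :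
    poisson u s ≤ 1 / Real.pi * u / c := by
  unfold poisson
  apply div_le_div_of_nonneg_left (by positivity) hc hs

lemma continuous_poisson {u : ℝ} (hu : 0 < u) : Continuous (poisson u) := by
  apply Continuous.div continuous_const (by continuity)
  intro t; positivity

lemma poisson_eq {u : ℝ} (hu : 0 < u) (t : ℝ) :
    poisson u t = (1 / Real.pi * u⁻¹) * (1 + (t / u) ^ 2)⁻¹ := by
  unfold poisson
  rw [div_pow]
  field_simp

lemma integrable_poisson {u : ℝ} (hu : 0 < u) : Integrable (poisson u) := by
  have : poisson u = fun t => (1 / Real.pi * u⁻¹) * (1 + (t / u) ^ 2)⁻¹ := by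
    funext t; exact poisson_eq hu t
  rw [this]
  exact (integrable_inv_one_add_sq.comp_div hu.ne').const_mul _

lemma integral_poisson {u : ℝ} (hu : 0 < u) : ∫ t, poisson u t = 1 := by
  have : poisson u = fun t => (1 / Real.pi * u⁻¹) * (1 + (t / u) ^ 2)⁻¹ := by
    funext t; exact poisson_eq hu t
  rw [this]
  rw [MeasureTheory.integral_const_mul]
  rw [MeasureTheory.Measure.integral_comp_div (fun s => (1 + s ^ 2)⁻¹) u]
  rw [integral_univ_inv_one_add_sq]
  simp only [abs_of_pos hu, smul_eq_mul]
  field_simp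

lemma integrable_poisson_sub {u : ℝ} (hu : 0 < u) (y : ℝ) :
    Integrable (fun t => poisson u (t - y)) :=
  (integrable_poisson hu).comp_sub_right y

lemma integral_poisson_sub {u : ℝ} (hu : 0 < u) (y : ℝ) :
    ∫ t, poisson u (t - y) = 1 := by
  rw [integral_sub_right_eq_self (poisson u) y]
  exact integral_poisson hu

lemma tail_set_eq {a : ℝ} : {t : ℝ | a < |t|} = Iio (-a) ∪ Ioi a := by
  ext t
  simp only [mem_setOf_eq, mem_union, mem_Iio, mem_Ioi, lt_abs]
  constructor
  · rintro (h | h)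
    · exact Or.inr h
    · exact Or.inl (by linarith)
  · rintro (h | h)
    · exact Or.inr (by linarith)
    · exact Or.inl h

lemma measurableSet_tail (a : ℝ) : MeasurableSet {t : ℝ | a < |t|} := by
  rw [tail_set_eq]; exact measurableSet_Iio.union measurableSet_Ioi

lemma measurable_abs_rpow (q : ℝ) (hq : q ≠ 0) : Measurable fun t : ℝ => |t| ^ q := by
  have : (fun t : ℝ => |t| ^ q) = fun t => if t = 0 then 0 else Real.exp (Real.log |t| * q) := by
    funext t
    split_ifs with h
    · simp [Real.zero_rpow hq, h]
    · rw [Real.rpow_def_of_pos (abs_pos.2 h)]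
  rw [this]
  exact Measurable.ite (measurableSet_eq_fun measurable_id measurable_const)
    measurable_const (Real.measurable_exp.comp ((Real.measurable_log.comp measurable_abs).mul_const q))

lemma abs_rpow_nonneg (q t : ℝ) : 0 ≤ |t| ^ q := Real.rpow_nonneg (abs_nonneg t) q

lemma integrableOn_abs_rpow_Ioi {q a : ℝ} (hq : q < -1) (ha : 0 < a) :
    IntegrableOn (fun t : ℝ => |t| ^ q) (Ioi a) := by
  apply (integrableOn_Ioi_rpow_of_lt hq ha).congr_fun _ measurableSet_Ioi
  intro t ht
  dsimp only
  rw [abs_of_pos (ha.trans ht)]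

lemma integrableOn_abs_rpow_Iio {q a : ℝ} (hq : q < -1) (ha : 0 < a) :
    IntegrableOn (fun t : ℝ => |t| ^ q) (Iio (-a)) := by
  have h1 := (integrable_indicator_iff measurableSet_Ioi).2
    (integrableOn_abs_rpow_Ioi hq ha)
  have h2 := h1.comp_neg
  have h3 : (fun t : ℝ => (Ioi a).indicator (fun s : ℝ => |s| ^ q) (-t))
      = (Iio (-a)).indicator (fun s : ℝ => |s| ^ q) := by
    funext t
    by_cases h : a < -t
    · rw [indicator_of_mem (by simpa using h), indicator_of_mem (by simp; linarith), abs_neg]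
    · rw [indicator_of_notMem (by simpa using h), indicator_of_notMem (by simp; linarith)]
  rw [h3] at h2
  exact (integrable_indicator_iff measurableSet_Iio).1 h2

lemma integrableOn_abs_rpow_tail {q a : ℝ} (hq : q < -1) (ha : 0 < a) :
    IntegrableOn (fun t : ℝ => |t| ^ q) {t : ℝ | a < |t|} := by
  rw [tail_set_eq]
  exact (integrableOn_abs_rpow_Iio hq ha).union (integrableOn_abs_rpow_Ioi hq ha)

lemma integrable_min_one_rpow {q : ℝ} (hq : q < -1) :
    Integrable (fun t : ℝ => min 1 (|t| ^ q)) := by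
  have hmeas : AEStronglyMeasurable (fun t : ℝ => min 1 (|t| ^ q)) volume :=
    (measurable_const.min (measurable_abs_rpow q (by linarith))).aestronglyMeasurable
  rw [← integrableOn_univ]
  have hu : (univ : Set ℝ) = {t : ℝ | 1 < |t|} ∪ {t : ℝ | 1 < |t|}ᶜ := by simp
  rw [hu]
  apply IntegrableOn.union
  · apply Integrable.mono (integrableOn_abs_rpow_tail hq one_pos) hmeas.restrict
    filter_upwards with t
    rw [Real.norm_eq_abs, Real.norm_eq_abs,
      _root_.abs_of_nonneg (le_min zero_le_one (abs_rpow_nonneg q t)),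
      _root_.abs_of_nonneg (abs_rpow_nonneg q t)]
    exact min_le_right _ _
  · have hsub : {t : ℝ | 1 < |t|}ᶜ ⊆ Icc (-1 : ℝ) 1 := by
      intro t ht
      simp only [mem_compl_iff, mem_setOf_eq, not_lt] at ht
      exact abs_le.1 ht
    apply IntegrableOn.mono_set _ hsub
    apply Integrable.mono' (g := fun _ : ℝ => (1 : ℝ))
      (integrableOn_const (μ := volume) (s := Icc (-1:ℝ) 1) (C := (1:ℝ)) (by simp)) hmeas.restrict
    filter_upwards with t
    rw [Real.norm_eq_abs, _root_.abs_of_nonneg (le_min zero_le_one (abs_rpow_nonneg q t))]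
    exact min_le_left _ _

lemma integrable_one_add_sq_rpow {p : ℝ} (hp : 1 / 2 < p) :
    Integrable (fun s : ℝ => ((1 + s ^ 2) ^ p)⁻¹) := by
  have hcont : Continuous (fun s : ℝ => ((1 + s ^ 2) ^ p)⁻¹) := by
    apply Continuous.inv₀
    · exact (Continuous.rpow_const (by continuity) (fun s => Or.inl (by positivity)))
    · intro s
      positivity
  apply Integrable.mono' (g := fun t : ℝ => min 1 (|t| ^ (-(2 * p))))
    (integrable_min_one_rpow (by linarith)) hcont.aestronglyMeasurable
  have h0 : ∀ᵐ t : ℝ, t ≠ 0 := by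
    rw [ae_iff]
    have : {t : ℝ | ¬t ≠ 0} = {(0:ℝ)} := by ext t; simp
    rw [this]
    exact Real.volume_singleton
  have hp' : 0 ≤ p := by linarith
  filter_upwards [h0] with t ht
  rw [Real.norm_eq_abs, _root_.abs_of_nonneg (by positivity)]
  refine le_min ?_ ?_
  · apply inv_le_one_of_one_le₀
    calc (1:ℝ) = 1 ^ p := (Real.one_rpow p).symm
    _ ≤ (1 + t ^ 2) ^ p := Real.rpow_le_rpow zero_le_one (by nlinarith) hp'
  · rw [Real.rpow_neg (abs_nonneg t)]
    apply inv_anti₀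
    · apply Real.rpow_pos_of_pos (abs_pos.2 ht)
    · calc |t| ^ (2 * p) = (|t| ^ (2:ℝ)) ^ p := by rw [← Real.rpow_mul (abs_nonneg t)]
      _ = (t ^ 2) ^ p := by rw [Real.rpow_two, _root_.sq_abs]
      _ ≤ (1 + t ^ 2) ^ p := Real.rpow_le_rpow (by positivity) (by nlinarith) hp'

/-- The constant in `Kker`. -/
def C0 (k : ℝ) : ℝ := Real.Gamma (1 + k) * Real.exp 1 / (2 * Real.pi)

lemma C0_pos {k : ℝ} (hk : 0 < 1 + k) : 0 < C0 k := by
  unfold C0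
  have := Real.Gamma_pos_of_pos hk
  have := Real.exp_pos 1
  have := Real.pi_pos
  positivity

/-- The absolute value of the non-Poisson part of the integrand. -/
def gf (k l x t : ℝ) : ℝ :=
  ((1 + x⁻¹) ^ 2 + t ^ 2) ^ (l / 2) * (C0 k * x / (1 + (x * t) ^ 2) ^ ((1 + k) / 2))

lemma gf_nonneg {k l x t : ℝ} (hk : 0 < 1 + k) (hx : 0 < x) : 0 ≤ gf k l x t := by
  unfold gf
  have h1 : (0:ℝ) ≤ ((1 + x⁻¹) ^ 2 + t ^ 2) ^ (l / 2) := Real.rpow_nonneg (by positivity) _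
  have h2 : (0:ℝ) < (1 + (x * t) ^ 2) ^ ((1 + k) / 2) := Real.rpow_pos_of_pos (by positivity) _
  have := C0_pos hk
  positivity

lemma continuous_gf {k l x : ℝ} (hx : 0 < x) : Continuous (gf k l x) := by
  unfold gf
  apply Continuous.mul
  · exact Continuous.rpow_const (by continuity) (fun t => Or.inl (by positivity))
  · apply Continuous.div continuous_const
    · exact Continuous.rpow_const (by continuity) (fun t => Or.inl (by positivity))
    · intro t
      exact ne_of_gt (Real.rpow_pos_of_pos (by positivity) _)

lemma sq_to_rpow {t : ℝ} (e : ℝ) (_ : t ≠ 0 ∨ 0 ≤ e) : (t ^ 2) ^ e = |t| ^ (2 * e) := by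
  rw [← _root_.sq_abs t, ← Real.rpow_two, ← Real.rpow_mul (abs_nonneg t)]

lemma gf_le_tail {k l x a t : ℝ} (hl : 0 ≤ l) (hk : 0 < 1 + k) (hx : 1 ≤ x) (ha : 0 < a)
    (ht : a ≤ |t|) :
    gf k l x t ≤ C0 k * (1 + 4 / a ^ 2) ^ (l / 2) * x ^ (-k) * |t| ^ (l - 1 - k) := by
  have hx0 : 0 < x := lt_of_lt_of_le one_pos hx
  have ht0 : 0 < |t| := lt_of_lt_of_le ha ht
  have htne : t ≠ 0 := abs_pos.1 ht0
  have hC0 := C0_pos hk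
  have hxi : x⁻¹ ≤ 1 := inv_le_one_of_one_le₀ hx
  have hxip : 0 < x⁻¹ := inv_pos.2 hx0
  have ha2 : a ^ 2 ≤ t ^ 2 := by
    have := _root_.sq_abs t
    nlinarith
  have hA : ((1 + x⁻¹) ^ 2 + t ^ 2) ^ (l / 2) ≤ (1 + 4 / a ^ 2) ^ (l / 2) * |t| ^ l := by
    have h1 : (1 + x⁻¹) ^ 2 + t ^ 2 ≤ (1 + 4 / a ^ 2) * t ^ 2 := by
      have h4 : 4 ≤ 4 / a ^ 2 * t ^ 2 := by
        rw [div_mul_eq_mul_div, le_div_iff₀ (by positivity)]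
        nlinarith
      nlinarith
    calc ((1 + x⁻¹) ^ 2 + t ^ 2) ^ (l / 2) ≤ ((1 + 4 / a ^ 2) * t ^ 2) ^ (l / 2) :=
        Real.rpow_le_rpow (by positivity) h1 (by positivity)
      _ = (1 + 4 / a ^ 2) ^ (l / 2) * (t ^ 2) ^ (l / 2) :=
        Real.mul_rpow (by positivity) (by positivity)
      _ = (1 + 4 / a ^ 2) ^ (l / 2) * |t| ^ l := by
        rw [sq_to_rpow (l / 2) (Or.inl htne), show 2 * (l / 2) = l by ring]
  have hB : C0 k * x / (1 + (x * t) ^ 2) ^ ((1 + k) / 2) ≤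
      C0 k * (x ^ (-k) * |t| ^ (-(1 + k))) := by
    have hxt : x * t ≠ 0 := by positivity
    have hden : (x * |t|) ^ (1 + k) ≤ (1 + (x * t) ^ 2) ^ ((1 + k) / 2) := by
      have he : (x * |t|) ^ (1 + k) = ((x * t) ^ 2) ^ ((1 + k) / 2) := by
        rw [sq_to_rpow ((1 + k) / 2) (Or.inl hxt), abs_mul, _root_.abs_of_pos hx0,
          show 2 * ((1 + k) / 2) = 1 + k by ring]
      rw [he]
      exact Real.rpow_le_rpow (by positivity) (by nlinarith) (by positivity)
    have hdenpos : 0 < (x * |t|) ^ (1 + k) := Real.rpow_pos_of_pos (by positivity) _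
    have step1 : C0 k * x / (1 + (x * t) ^ 2) ^ ((1 + k) / 2) ≤
        C0 k * x / (x * |t|) ^ (1 + k) :=
      div_le_div_of_nonneg_left (by positivity) hdenpos hden
    have step2 : C0 k * x / (x * |t|) ^ (1 + k) = C0 k * (x ^ (-k) * |t| ^ (-(1 + k))) := by
      rw [Real.mul_rpow hx0.le (abs_nonneg t)]
      have hxk : x ^ (-k) = x * x ^ (-(1 + k)) := by
        have h := Real.rpow_add hx0 1 (-(1 + k))
        rw [Real.rpow_one] at h
        rw [show -k = 1 + -(1 + k) by ring, h]
      rw [hxk, Real.rpow_neg (abs_nonneg t), Real.rpow_neg hx0.le]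
      have hX : x ^ (1 + k) ≠ 0 := (Real.rpow_pos_of_pos hx0 _).ne'
      have hT : |t| ^ (1 + k) ≠ 0 := (Real.rpow_pos_of_pos ht0 _).ne'
      field_simp
    exact le_of_le_of_eq step1 step2
  calc gf k l x t ≤ ((1 + 4 / a ^ 2) ^ (l / 2) * |t| ^ l) *
        (C0 k * (x ^ (-k) * |t| ^ (-(1 + k)))) := by
        unfold gf
        apply mul_le_mul hA hB
        · exact div_nonneg (by positivity) (Real.rpow_nonneg (by positivity) _)
        · positivity
    _ = C0 k * (1 + 4 / a ^ 2) ^ (l / 2) * x ^ (-k) * (|t| ^ l * |t| ^ (-(1 + k))) := by ring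
    _ = C0 k * (1 + 4 / a ^ 2) ^ (l / 2) * x ^ (-k) * |t| ^ (l - 1 - k) := by
        rw [← Real.rpow_add ht0, show l + -(1 + k) = l - 1 - k by ring]

lemma x_rpow_neg_le_one {k x : ℝ} (hk : 0 ≤ k) (hx : 1 ≤ x) : x ^ (-k) ≤ 1 :=
  Real.rpow_le_one_of_one_le_of_nonpos hx (by linarith)

lemma gf_le_tail_one {k l x t : ℝ} (hl : 0 ≤ l) (hk0 : 0 ≤ k) (hk : 0 < 1 + k) (hx : 1 ≤ x)
    (ht : 1 ≤ |t|) :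
    gf k l x t ≤ C0 k * 5 ^ (l / 2) * |t| ^ (l - 1 - k) := by
  have h := gf_le_tail hl hk hx one_pos ht
  rw [show (1 + 4 / (1:ℝ) ^ 2) = 5 by norm_num] at h
  refine h.trans ?_
  have hC0 := C0_pos hk
  have h5 : (0:ℝ) ≤ 5 ^ (l / 2) := Real.rpow_nonneg (by norm_num) _
  have hx1 := x_rpow_neg_le_one hk0 hx
  have hxn : (0:ℝ) ≤ x ^ (-k) := Real.rpow_nonneg (by linarith) _
  have htn : (0:ℝ) ≤ |t| ^ (l - 1 - k) := abs_rpow_nonneg _ _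
  calc C0 k * 5 ^ (l / 2) * x ^ (-k) * |t| ^ (l - 1 - k)
      ≤ C0 k * 5 ^ (l / 2) * 1 * |t| ^ (l - 1 - k) := by
        apply mul_le_mul_of_nonneg_right _ htn
        exact mul_le_mul_of_nonneg_left hx1 (mul_nonneg hC0.le h5)
    _ = C0 k * 5 ^ (l / 2) * |t| ^ (l - 1 - k) := by ring

lemma gf_le_center {k l x t : ℝ} (hl : 0 ≤ l) (hk : 0 < 1 + k) (hx : 1 ≤ x) :
    gf k l x t ≤ ((1 + x⁻¹) ^ 2 + t ^ 2) ^ (l / 2) *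
      (C0 k * (x * ((1 + (x * t) ^ 2) ^ ((1 + k) / 2))⁻¹)) := by
  unfold gf
  rw [div_eq_mul_inv]
  ring_nf
  exact le_refl _

lemma integrable_gf {k l x : ℝ} (hl : 0 ≤ l) (hkl : l < k) (hx : 1 ≤ x) :
    Integrable (gf k l x) := by
  have hx0 : 0 < x := lt_of_lt_of_le one_pos hx
  have hk0 : 0 ≤ k := hl.trans hkl.le
  have hk1 : 0 < 1 + k := by linarith
  have hC0 := C0_pos hk1
  have hq : l - 1 - k < -1 := by linarith
  apply Integrable.mono' (g := fun t : ℝ => (C0 k * 5 ^ (l / 2) * x) * min 1 (|t| ^ (l - 1 - k)))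
    ((integrable_min_one_rpow hq).const_mul _) (continuous_gf hx0).aestronglyMeasurable
  have h0 : ∀ᵐ t : ℝ, t ≠ (0:ℝ) := by
    rw [ae_iff]
    have : {t : ℝ | ¬t ≠ 0} = {(0:ℝ)} := by ext t; simp
    rw [this]
    exact Real.volume_singleton
  filter_upwards [h0] with t ht0
  rw [Real.norm_eq_abs, _root_.abs_of_nonneg (gf_nonneg hk1 hx0)]
  have h5 : (0:ℝ) < 5 ^ (l / 2) := Real.rpow_pos_of_pos (by norm_num) _
  by_cases ht : 1 ≤ |t|
  · have hmin : min 1 (|t| ^ (l - 1 - k)) = |t| ^ (l - 1 - k) := by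
      apply min_eq_right
      exact Real.rpow_le_one_of_one_le_of_nonpos ht (by linarith)
    rw [hmin]
    refine (gf_le_tail_one hl hk0 hk1 hx ht).trans ?_
    have htn : (0:ℝ) ≤ |t| ^ (l - 1 - k) := abs_rpow_nonneg _ _
    apply mul_le_mul_of_nonneg_right _ htn
    exact le_mul_of_one_le_right (mul_nonneg hC0.le h5.le) hx
  · push_neg at ht
    have hmin : min 1 (|t| ^ (l - 1 - k)) = 1 := by
      apply min_eq_left
      exact Real.one_le_rpow_of_pos_of_le_one_of_nonpos (abs_pos.2 ht0) ht.le (by linarith)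
    rw [hmin, mul_one]
    have hD : (1:ℝ) ≤ (1 + (x * t) ^ 2) ^ ((1 + k) / 2) := by
      calc (1:ℝ) = 1 ^ ((1 + k) / 2) := (Real.one_rpow _).symm
        _ ≤ (1 + (x * t) ^ 2) ^ ((1 + k) / 2) :=
          Real.rpow_le_rpow zero_le_one (by nlinarith) (by positivity)
    have hfac2 : C0 k * x / (1 + (x * t) ^ 2) ^ ((1 + k) / 2) ≤ C0 k * x :=
      div_le_self (by positivity) hD
    have hfac1 : ((1 + x⁻¹) ^ 2 + t ^ 2) ^ (l / 2) ≤ 5 ^ (l / 2) := by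
      apply Real.rpow_le_rpow (by positivity) _ (by positivity)
      have hxi : x⁻¹ ≤ 1 := inv_le_one_of_one_le₀ hx
      have hxip : (0:ℝ) ≤ x⁻¹ := inv_nonneg.2 hx0.le
      have ht2 : t ^ 2 ≤ 1 := (sq_le_one_iff_abs_le_one t).2 ht.le
      nlinarith
    calc gf k l x t ≤ 5 ^ (l / 2) * (C0 k * x) := by
          unfold gf
          apply mul_le_mul hfac1 hfac2 _ h5.le
          exact div_nonneg (by positivity) (Real.rpow_nonneg (by positivity) _)
      _ = C0 k * 5 ^ (l / 2) * x := by ring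

lemma integral_scaled {k x : ℝ} (hx : 0 < x) :
    ∫ t : ℝ, x * ((1 + (x * t) ^ 2) ^ ((1 + k) / 2))⁻¹ =
      ∫ s : ℝ, ((1 + s ^ 2) ^ ((1 + k) / 2))⁻¹ := by
  rw [MeasureTheory.integral_const_mul,
    MeasureTheory.Measure.integral_comp_mul_left
      (fun s : ℝ => ((1 + s ^ 2) ^ ((1 + k) / 2))⁻¹) x]
  rw [abs_of_pos (inv_pos.2 hx), smul_eq_mul, ← mul_assoc, mul_inv_cancel₀ hx.ne', one_mul]

/-- Uniform (in `x ≥ 1`) bound for `∫ gf`. -/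
def Gtot (k l : ℝ) : ℝ :=
  C0 k * 5 ^ (l / 2) *
    ((∫ s : ℝ, ((1 + s ^ 2) ^ ((1 + k) / 2))⁻¹) + ∫ t in {t : ℝ | 1 < |t|}, |t| ^ (l - 1 - k))

lemma integral_gf_le {k l x : ℝ} (hl : 0 ≤ l) (hkl : l < k) (hx : 1 ≤ x) :
    ∫ t, gf k l x t ≤ Gtot k l := by
  have hx0 : 0 < x := lt_of_lt_of_le one_pos hx
  have hk0 : 0 ≤ k := hl.trans hkl.le
  have hk1 : 0 < 1 + k := by linarith
  have hC0 := C0_pos hk1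
  have hq : l - 1 - k < -1 := by linarith
  have h5 : (0:ℝ) < 5 ^ (l / 2) := Real.rpow_pos_of_pos (by norm_num) _
  have hI : Integrable (gf k l x) := integrable_gf hl hkl hx
  have hT : MeasurableSet {t : ℝ | 1 < |t|} := measurableSet_tail 1
  have hIsc : Integrable (fun t : ℝ => C0 k * (x * ((1 + (x * t) ^ 2) ^ ((1 + k) / 2))⁻¹)) := by
    have := ((integrable_one_add_sq_rpow (p := (1 + k) / 2) (by linarith)).comp_mul_left'
      (R := x) hx0.ne')
    exact (this.const_mul x).const_mul (C0 k)
  rw [← integral_add_compl hT hI]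
  have h1 : ∫ t in {t : ℝ | 1 < |t|}, gf k l x t ≤
      C0 k * 5 ^ (l / 2) * ∫ t in {t : ℝ | 1 < |t|}, |t| ^ (l - 1 - k) := by
    rw [← MeasureTheory.integral_const_mul]
    apply setIntegral_mono_on hI.integrableOn
      (((integrableOn_abs_rpow_tail hq one_pos)).const_mul _) hT
    intro t ht
    exact gf_le_tail_one hl hk0 hk1 hx (le_of_lt ht)
  have h2 : ∫ t in {t : ℝ | 1 < |t|}ᶜ, gf k l x t ≤
      C0 k * 5 ^ (l / 2) * ∫ s : ℝ, ((1 + s ^ 2) ^ ((1 + k) / 2))⁻¹ := by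
    have step1 : ∫ t in {t : ℝ | 1 < |t|}ᶜ, gf k l x t ≤
        ∫ t in {t : ℝ | 1 < |t|}ᶜ, 5 ^ (l / 2) * (C0 k * (x * ((1 + (x * t) ^ 2) ^ ((1 + k) / 2))⁻¹)) := by
      apply setIntegral_mono_on hI.integrableOn ((hIsc.const_mul _).integrableOn) hT.compl
      intro t ht
      simp only [mem_compl_iff, mem_setOf_eq, not_lt] at ht
      refine (gf_le_center hl hk1 hx).trans ?_
      apply mul_le_mul_of_nonneg_right _ (by positivity)
      apply Real.rpow_le_rpow (by positivity) _ (by positivity)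
      have hxi : x⁻¹ ≤ 1 := inv_le_one_of_one_le₀ hx
      have hxip : (0:ℝ) ≤ x⁻¹ := inv_nonneg.2 hx0.le
      have ht2 : t ^ 2 ≤ 1 := (sq_le_one_iff_abs_le_one t).2 ht
      nlinarith
    refine step1.trans ?_
    have step2 : ∫ t in {t : ℝ | 1 < |t|}ᶜ,
        5 ^ (l / 2) * (C0 k * (x * ((1 + (x * t) ^ 2) ^ ((1 + k) / 2))⁻¹)) ≤
        ∫ t : ℝ, 5 ^ (l / 2) * (C0 k * (x * ((1 + (x * t) ^ 2) ^ ((1 + k) / 2))⁻¹)) := by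
      apply setIntegral_le_integral (hIsc.const_mul _)
      filter_upwards with t
      have : (0:ℝ) < (1 + (x * t) ^ 2) ^ ((1 + k) / 2) := Real.rpow_pos_of_pos (by positivity) _
      positivity
    refine step2.trans ?_
    rw [MeasureTheory.integral_const_mul, MeasureTheory.integral_const_mul, integral_scaled hx0]
    exact le_of_eq (by ring)
  have hadd := add_le_add h1 h2
  refine hadd.trans ?_
  unfold Gtot
  exact le_of_eq (by ring)

lemma abs_integrand {k l : ℝ} (hk : 0 < 1 + k) {x : ℝ} (hx : 0 < x) (y t : ℝ) :
    ‖((poisson x⁻¹ (t - y) : ℝ) : ℂ) * Complex.exp (Complex.I * (t:ℂ) * (x:ℂ)) *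
      (1 + ((x⁻¹ : ℝ) : ℂ) + Complex.I * (t:ℂ)) ^ ((l : ℝ) : ℂ) * Kker k x t‖
      = poisson x⁻¹ (t - y) * gf k l x t := by
  have hxi : 0 < x⁻¹ := inv_pos.2 hx
  have hC0 := C0_pos hk
  have hz1 : (1 + ((x⁻¹:ℝ):ℂ) + Complex.I * (t:ℂ)) ≠ 0 := by
    intro h
    have h' := congrArg Complex.re h
    simp only [Complex.add_re, Complex.one_re, Complex.ofReal_re, Complex.mul_re,
      Complex.I_re, Complex.ofReal_im, Complex.I_im, Complex.zero_re] at h'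
    simp at h'
    linarith
  have hz2 : ((1:ℂ) + Complex.I * (x:ℂ) * (t:ℂ)) ≠ 0 := by
    intro h
    have h' := congrArg Complex.re h
    simp only [Complex.add_re, Complex.one_re, Complex.ofReal_re, Complex.mul_re,
      Complex.I_re, Complex.ofReal_im, Complex.I_im, Complex.zero_re] at h'
    simp at h'
  rw [norm_mul, norm_mul, norm_mul]
  have e1 : ‖((poisson x⁻¹ (t - y) : ℝ) : ℂ)‖ = poisson x⁻¹ (t - y) := by
    rw [Complex.norm_real, Real.norm_eq_abs, _root_.abs_of_nonneg (poisson_nonneg hxi.le _)]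
  have e2 : ‖Complex.exp (Complex.I * (t:ℂ) * (x:ℂ))‖ = 1 := by
    rw [Complex.norm_exp]
    simp [Complex.mul_re]
  have habs1 : ‖1 + ((x⁻¹:ℝ):ℂ) + Complex.I * (t:ℂ)‖
      = Real.sqrt ((1 + x⁻¹) ^ 2 + t ^ 2) := by
    rw [Complex.norm_def]
    congr 1
    simp [Complex.normSq_apply]
    ring
  have e3 : ‖(1 + ((x⁻¹:ℝ):ℂ) + Complex.I * (t:ℂ)) ^ ((l : ℝ) : ℂ)‖
      = ((1 + x⁻¹) ^ 2 + t ^ 2) ^ (l / 2) := by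
    rw [Complex.norm_cpow_of_ne_zero hz1, habs1]
    simp only [Complex.ofReal_re, Complex.ofReal_im, mul_zero, Real.exp_zero, div_one]
    rw [Real.sqrt_eq_rpow, ← Real.rpow_mul (by positivity)]
    congr 1
    ring
  have habs2 : ‖(1:ℂ) + Complex.I * (x:ℂ) * (t:ℂ)‖
      = Real.sqrt (1 + (x * t) ^ 2) := by
    rw [Complex.norm_def]
    congr 1
    simp [Complex.normSq_apply]
    ring
  have e4 : ‖Kker k x t‖ = C0 k * x / (1 + (x * t) ^ 2) ^ ((1 + k) / 2) := by
    unfold Kker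
    rw [norm_div, norm_mul, Complex.norm_real, Real.norm_eq_abs, Complex.norm_real, Real.norm_eq_abs,
      Complex.norm_cpow_of_ne_zero hz2, habs2]
    simp only [Complex.ofReal_re, Complex.ofReal_im, mul_zero, Real.exp_zero, div_one]
    rw [Real.sqrt_eq_rpow, ← Real.rpow_mul (by positivity)]
    rw [show |Real.Gamma (1 + k) * Real.exp 1 / (2 * Real.pi)| = C0 k from
      _root_.abs_of_nonneg hC0.le, _root_.abs_of_nonneg hx.le]
    congr 1
    ring
  rw [e1, e2, e3, e4]
  unfold gf
  ring

lemma rker_abs_le {k l : ℝ} (hk : 0 < 1 + k) {x : ℝ} (hx : 0 < x) (y : ℝ) :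
    ‖Rker k l x y‖ ≤ ∫ t, poisson x⁻¹ (t - y) * gf k l x t := by
  unfold Rker
  refine (norm_integral_le_integral_norm _).trans_eq ?_
  refine integral_congr_ae (Filter.Eventually.of_forall fun t => ?_)
  dsimp only
  rw [abs_integrand hk hx y t]

lemma integrable_poisson_mul_gf {k l x : ℝ} (hl : 0 ≤ l) (hkl : l < k) (hx : 1 ≤ x) (y : ℝ) :
    Integrable (fun t => poisson x⁻¹ (t - y) * gf k l x t) := by
  have hx0 : 0 < x := lt_of_lt_of_le one_pos hx
  have hxi : 0 < x⁻¹ := inv_pos.2 hx0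
  apply Integrable.bdd_mul (c := 1 / Real.pi * x⁻¹ / (x⁻¹ ^ 2)) (integrable_gf hl hkl hx)
    ((continuous_poisson hxi).comp (continuous_id.sub continuous_const)).aestronglyMeasurable
  refine Filter.Eventually.of_forall fun t => ?_
  simp only [Function.comp_apply, id_eq]
  rw [Real.norm_eq_abs, _root_.abs_of_nonneg (poisson_nonneg hxi.le _)]
  exact poisson_le hxi (by positivity) (by nlinarith [sq_nonneg (t - y)])

lemma rker_key {k l δ : ℝ} (hl : 0 ≤ l) (hkl : l < k) (hδ : 0 < δ) {x y : ℝ}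
    (hx : 1 ≤ x) (hy : δ < |y|) :
    ‖Rker k l x y‖ ≤
      4 / Real.pi * Gtot k l * x⁻¹ * (y ^ 2)⁻¹ +
      C0 k * (1 + 16 / δ ^ 2) ^ (l / 2) * 2 ^ (-(l - 1 - k)) * x ^ (-k) * |y| ^ (l - 1 - k) := by
  have hx0 : 0 < x := lt_of_lt_of_le one_pos hx
  have hxi : 0 < x⁻¹ := inv_pos.2 hx0
  have hk0 : 0 ≤ k := hl.trans hkl.le
  have hk1 : 0 < 1 + k := by linarith
  have hC0 := C0_pos hk1
  have hy0 : 0 < |y| := hδ.trans hy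
  have hyne : y ≠ 0 := abs_pos.1 hy0
  have hq : l - 1 - k < -1 := by linarith
  have hPg := integrable_poisson_mul_gf hl hkl hx y
  have hgint := integrable_gf hl hkl hx
  have hgnn : ∀ t, 0 ≤ gf k l x t := fun t => gf_nonneg hk1 hx0
  have hPnn : ∀ t, 0 ≤ poisson x⁻¹ (t - y) := fun t => poisson_nonneg hxi.le _
  refine (rker_abs_le hk1 hx0 y).trans ?_
  rw [← integral_add_compl (measurableSet_tail (|y| / 2))
    (f := fun t => poisson x⁻¹ (t - y) * gf k l x t) hPg]
  have hcenter : ∫ t in {t : ℝ | |y| / 2 < |t|}ᶜ, poisson x⁻¹ (t - y) * gf k l x t ≤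
      4 / Real.pi * Gtot k l * x⁻¹ * (y ^ 2)⁻¹ := by
    have hc : (0:ℝ) < y ^ 2 / 4 := by positivity
    have step1 : ∫ t in {t : ℝ | |y| / 2 < |t|}ᶜ, poisson x⁻¹ (t - y) * gf k l x t ≤
        ∫ t in {t : ℝ | |y| / 2 < |t|}ᶜ, (1 / Real.pi * x⁻¹ / (y ^ 2 / 4)) * gf k l x t := by
      apply setIntegral_mono_on hPg.integrableOn (hgint.const_mul _).integrableOn
        (measurableSet_tail _).compl
      intro t ht
      simp only [mem_compl_iff, mem_setOf_eq, not_lt] at ht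
      apply mul_le_mul_of_nonneg_right _ (hgnn t)
      apply poisson_le hxi hc
      have h1 : |y| - |t| ≤ |t - y| := by
        rw [abs_sub_comm]
        exact (abs_sub_abs_le_abs_sub y t)
      have h2 : |y| / 2 ≤ |t - y| := by linarith
      have h3 : (t - y) ^ 2 = |t - y| ^ 2 := (_root_.sq_abs _).symm
      have h4 : |y| / 2 * (|y| / 2) ≤ |t - y| * |t - y| :=
        mul_self_le_mul_self (by positivity) h2
      nlinarith [sq_nonneg x⁻¹, _root_.sq_abs y]
    refine step1.trans ?_
    rw [MeasureTheory.integral_const_mul]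
    have step2 : ∫ t in {t : ℝ | |y| / 2 < |t|}ᶜ, gf k l x t ≤ Gtot k l := by
      refine le_trans (setIntegral_le_integral hgint
        (Filter.Eventually.of_forall hgnn)) (integral_gf_le hl hkl hx)
    calc 1 / Real.pi * x⁻¹ / (y ^ 2 / 4) * ∫ t in {t : ℝ | |y| / 2 < |t|}ᶜ, gf k l x t
        ≤ 1 / Real.pi * x⁻¹ / (y ^ 2 / 4) * Gtot k l := by
          apply mul_le_mul_of_nonneg_left step2
          have := Real.pi_pos
          positivity
      _ = 4 / Real.pi * Gtot k l * x⁻¹ * (y ^ 2)⁻¹ := by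
          field_simp
  have htail : ∫ t in {t : ℝ | |y| / 2 < |t|}, poisson x⁻¹ (t - y) * gf k l x t ≤
      C0 k * (1 + 16 / δ ^ 2) ^ (l / 2) * 2 ^ (-(l - 1 - k)) * x ^ (-k) * |y| ^ (l - 1 - k) := by
    set M : ℝ := C0 k * (1 + 16 / δ ^ 2) ^ (l / 2) * x ^ (-k) * (|y| / 2) ^ (l - 1 - k) with hM
    have hMnn : 0 ≤ M := by
      have : (0:ℝ) ≤ (1 + 16 / δ ^ 2) ^ (l / 2) := Real.rpow_nonneg (by positivity) _
      have : (0:ℝ) ≤ x ^ (-k) := Real.rpow_nonneg hx0.le _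
      have : (0:ℝ) ≤ (|y| / 2) ^ (l - 1 - k) := Real.rpow_nonneg (by positivity) _
      positivity
    have step1 : ∫ t in {t : ℝ | |y| / 2 < |t|}, poisson x⁻¹ (t - y) * gf k l x t ≤
        ∫ t in {t : ℝ | |y| / 2 < |t|}, M * poisson x⁻¹ (t - y) := by
      apply setIntegral_mono_on hPg.integrableOn
        (((integrable_poisson_sub hxi y).const_mul M).integrableOn) (measurableSet_tail _)
      intro t ht
      simp only [mem_setOf_eq] at ht
      rw [mul_comm (M) _]
      apply mul_le_mul_of_nonneg_left _ (hPnn t)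
      have hδt : δ / 2 ≤ |t| := by linarith
      have h1 := gf_le_tail hl hk1 hx (half_pos hδ) hδt
      rw [show (1 + 4 / (δ / 2) ^ 2) = 1 + 16 / δ ^ 2 by field_simp; ring] at h1
      refine h1.trans ?_
      rw [hM]
      have hnn : (0:ℝ) ≤ C0 k * (1 + 16 / δ ^ 2) ^ (l / 2) * x ^ (-k) :=
        mul_nonneg (mul_nonneg hC0.le (Real.rpow_nonneg (by positivity) _))
          (Real.rpow_nonneg hx0.le _)
      apply mul_le_mul_of_nonneg_left _ hnn
      exact Real.rpow_le_rpow_of_nonpos (by positivity) ht.le (by linarith)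
    refine step1.trans ?_
    rw [MeasureTheory.integral_const_mul]
    have step2 : ∫ t in {t : ℝ | |y| / 2 < |t|}, poisson x⁻¹ (t - y) ≤ 1 := by
      rw [← integral_poisson_sub hxi y]
      exact setIntegral_le_integral (integrable_poisson_sub hxi y)
        (Filter.Eventually.of_forall hPnn)
    calc M * ∫ t in {t : ℝ | |y| / 2 < |t|}, poisson x⁻¹ (t - y) ≤ M * 1 :=
        mul_le_mul_of_nonneg_left step2 hMnn
      _ = M := mul_one M
      _ = C0 k * (1 + 16 / δ ^ 2) ^ (l / 2) * 2 ^ (-(l - 1 - k)) * x ^ (-k) *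
            |y| ^ (l - 1 - k) := by
          rw [hM, show |y| / 2 = |y| * 2⁻¹ by ring,
            Real.mul_rpow (abs_nonneg y) (by norm_num),
            Real.inv_rpow (by norm_num), ← Real.rpow_neg (by norm_num)]
          ring
  linarith

end St12

/-- For `k > ℓ ≥ 0` and every `δ > 0`:
`lim_{x→∞} ∫_{|y|>δ} |R^{k,ℓ}(x,y)| dy = 0`. -/
theorem statement12 (k l : ℝ) (hl : 0 ≤ l) (hk : l < k) (δ : ℝ) (hδ : 0 < δ) :
    Tendsto (fun x : ℝ => ∫ y in {y : ℝ | δ < |y|}, ‖Rker k l x y‖)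
      atTop (nhds 0) := by
  have hk0 : 0 < k := lt_of_le_of_lt hl hk
  have hk1 : 0 < 1 + k := by linarith
  have hC0 := St12.C0_pos hk1
  have hq : l - 1 - k < -1 := by linarith
  have hS : MeasurableSet {y : ℝ | δ < |y|} := St12.measurableSet_tail δ
  have hI2 : IntegrableOn (fun y : ℝ => (y ^ 2)⁻¹) {y : ℝ | δ < |y|} := by
    apply (St12.integrableOn_abs_rpow_tail (by norm_num : (-2:ℝ) < -1) hδ).congr_fun _ hS
    intro y hy
    have hy0 : y ≠ 0 := abs_pos.1 (hδ.trans hy)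
    dsimp only
    rw [Real.rpow_neg (abs_nonneg y), Real.rpow_two, _root_.sq_abs]
  have hIq : IntegrableOn (fun y : ℝ => |y| ^ (l - 1 - k)) {y : ℝ | δ < |y|} :=
    St12.integrableOn_abs_rpow_tail hq hδ
  set c1 : ℝ := 4 / Real.pi * St12.Gtot k l with hc1
  set c2 : ℝ := St12.C0 k * (1 + 16 / δ ^ 2) ^ (l / 2) * 2 ^ (-(l - 1 - k)) with hc2
  set I2 : ℝ := ∫ y in {y : ℝ | δ < |y|}, (y ^ 2)⁻¹ with hI2def
  set Iq : ℝ := ∫ y in {y : ℝ | δ < |y|}, |y| ^ (l - 1 - k) with hIqdef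
  apply squeeze_zero'
    (g := fun x : ℝ => c1 * I2 * x⁻¹ + c2 * Iq * x ^ (-k))
  · filter_upwards with x
    exact setIntegral_nonneg hS fun y _ => norm_nonneg _
  · filter_upwards [eventually_ge_atTop (1:ℝ)] with x hx
    calc ∫ y in {y : ℝ | δ < |y|}, ‖Rker k l x y‖
        ≤ ∫ y in {y : ℝ | δ < |y|},
            (c1 * x⁻¹ * (y ^ 2)⁻¹ + c2 * x ^ (-k) * |y| ^ (l - 1 - k)) := by
          apply integral_mono_of_nonneg
          · filter_upwards with y
            exact norm_nonneg _
          · exact (hI2.const_mul (c1 * x⁻¹)).add (hIq.const_mul (c2 * x ^ (-k)))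
          · refine (ae_restrict_iff' hS).2 ?_
            filter_upwards with y hy
            exact St12.rker_key hl hk hδ hx hy
      _ = c1 * I2 * x⁻¹ + c2 * Iq * x ^ (-k) := by
          rw [integral_add]
          · have e1 : ∫ y in {y : ℝ | δ < |y|}, c1 * x⁻¹ * (y ^ 2)⁻¹ =
                (c1 * x⁻¹) * I2 := by
              rw [hI2def, ← MeasureTheory.integral_const_mul]
            have e2 : ∫ y in {y : ℝ | δ < |y|}, c2 * x ^ (-k) * |y| ^ (l - 1 - k) =
                (c2 * x ^ (-k)) * Iq := by
              rw [hIqdef, ← MeasureTheory.integral_const_mul]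
            rw [e1, e2]
            ring
          · exact hI2.const_mul (c1 * x⁻¹)
          · exact hIq.const_mul (c2 * x ^ (-k))
  · have t1 : Tendsto (fun x : ℝ => (c1 * I2) * x⁻¹) atTop (nhds ((c1 * I2) * 0)) :=
      tendsto_inv_atTop_zero.const_mul _
    have t2 : Tendsto (fun x : ℝ => (c2 * Iq) * x ^ (-k)) atTop (nhds ((c2 * Iq) * 0)) :=
      (tendsto_rpow_neg_atTop hk0).const_mul _
    have := t1.add t2
    simpa using this
end
end

section
/- Let λ be a frequency, (a_n) a complex sequence, k > ℓ ≥ 0, and f ∈ H^λ_{∞,ℓ}[Re > 0] with coefficients (a_n), with horizontal limit function f*. Then for every δ > 0, lim_{x→∞} ∫_{{y ∈ ℝ : |y| ≥ δ}} f*(iy) · R^{k,ℓ}(x,y)/(1 + iy)^ℓ dy = 0. -/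
open Complex MeasureTheory Filter Topology Set
open scoped Classical

noncomputable section

namespace S13aux

lemma poisson_eq {u : ℝ} (hu : 0 < u) (t : ℝ) :
    poisson u t = (Real.pi * u)⁻¹ * (1 + (t * u⁻¹) ^ 2)⁻¹ := by
  unfold poisson; field_simp

lemma poisson_nonneg {u : ℝ} (hu : 0 ≤ u) (t : ℝ) : 0 ≤ poisson u t := by
  unfold poisson
  apply div_nonneg (by positivity)
  positivity

lemma integrable_poisson {u : ℝ} (hu : 0 < u) : Integrable (poisson u) := by
  have h1 : Integrable (fun t : ℝ => (1 + (t * u⁻¹) ^ 2)⁻¹) :=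
    integrable_inv_one_add_sq.comp_mul_right' (by positivity)
  exact (h1.const_mul (Real.pi * u)⁻¹).congr (by
    filter_upwards with t using by rw [poisson_eq hu t])

lemma integral_poisson {u : ℝ} (hu : 0 < u) : ∫ t : ℝ, poisson u t = 1 := by
  have h1 : (∫ t : ℝ, (1 + (t * u⁻¹) ^ 2)⁻¹) = |u| • ∫ s : ℝ, (1 + s ^ 2)⁻¹ :=
    MeasureTheory.Measure.integral_comp_inv_mul_right (fun s : ℝ => (1 + s ^ 2)⁻¹) u
  calc (∫ t : ℝ, poisson u t) = ∫ t : ℝ, (Real.pi * u)⁻¹ * (1 + (t * u⁻¹) ^ 2)⁻¹ := by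
        congr 1; ext t; exact poisson_eq hu t
    _ = (Real.pi * u)⁻¹ * ∫ t : ℝ, (1 + (t * u⁻¹) ^ 2)⁻¹ := integral_const_mul _ _
    _ = 1 := by
        rw [h1, integral_univ_inv_one_add_sq, abs_of_pos hu, smul_eq_mul]
        field_simp

/-- auxiliary majorant -/
def psi0 (k l s : ℝ) : ℝ := (2 + |s|) ^ l * ((1 + s ^ 2) ^ ((1 + k) / 2))⁻¹

lemma psi0_nonneg (k l s : ℝ) : 0 ≤ psi0 k l s := by
  unfold psi0; positivity

lemma psi0_continuous (k l : ℝ) : Continuous (psi0 k l) := by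
  unfold psi0
  apply Continuous.mul
  · exact (continuous_const.add _root_.continuous_abs).rpow_const
      (fun s => Or.inl (ne_of_gt (by positivity : (0:ℝ) < 2 + |s|)))
  · apply Continuous.inv₀
    · exact (continuous_const.add (continuous_pow 2)).rpow_const (fun s => Or.inl (by positivity : (1:ℝ) + s ^ 2 ≠ 0))
    · intro s
      exact ne_of_gt (Real.rpow_pos_of_pos (by positivity) _)

lemma psi0_le {k l : ℝ} (hl : 0 ≤ l) (hk0 : 0 ≤ k) (s : ℝ) :
    psi0 k l s ≤ (2 ^ l * 2 ^ ((1 + k) / 2)) * (1 + ‖s‖) ^ (-(1 + k - l)) := by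
  have hb : (0:ℝ) < 1 + |s| := by positivity
  have h1 : (2 + |s|) ^ l ≤ 2 ^ l * (1 + |s|) ^ l := by
    rw [← Real.mul_rpow (by norm_num) hb.le]
    apply Real.rpow_le_rpow (by positivity) (by linarith [abs_nonneg s]) hl
  have h2 : ((1 + |s|) ^ (1 + k)) / 2 ^ ((1 + k) / 2) ≤ (1 + s ^ 2) ^ ((1 + k) / 2) := by
    have hbase : (1 + |s|) ^ 2 / 2 ≤ 1 + s ^ 2 := by
      nlinarith [sq_nonneg (1 - |s|), _root_.sq_abs s]
    have := Real.rpow_le_rpow (by positivity) hbase (by positivity :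
        (0:ℝ) ≤ (1 + k) / 2)
    have hnum : ((1 + |s|) ^ 2 : ℝ) ^ ((1 + k) / 2) = (1 + |s|) ^ (1 + k) := by
      rw [← Real.rpow_natCast (1 + |s|) 2, ← Real.rpow_mul hb.le]
      congr 1
      push_cast
      ring
    calc ((1 + |s|) ^ (1 + k)) / 2 ^ ((1 + k) / 2)
        = ((1 + |s|) ^ 2 / 2) ^ ((1 + k) / 2) := by
          rw [Real.div_rpow (by positivity) (by norm_num), hnum]
      _ ≤ (1 + s ^ 2) ^ ((1 + k) / 2) := this
  have hpos1 : (0:ℝ) < (1 + |s|) ^ (1 + k) := Real.rpow_pos_of_pos hb _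
  have hpos2 : (0:ℝ) < (1 + s ^ 2) ^ ((1 + k) / 2) := Real.rpow_pos_of_pos (by positivity) _
  have h3 : ((1 + s ^ 2) ^ ((1 + k) / 2))⁻¹ ≤ 2 ^ ((1 + k) / 2) * ((1 + |s|) ^ (1 + k))⁻¹ := by
    have hd : (0:ℝ) < (1 + |s|) ^ (1 + k) / 2 ^ ((1 + k) / 2) := by positivity
    have := inv_anti₀ hd h2
    rwa [inv_div, div_eq_mul_inv] at this
  calc psi0 k l s ≤ (2 ^ l * (1 + |s|) ^ l) * (2 ^ ((1 + k) / 2) * ((1 + |s|) ^ (1 + k))⁻¹) := by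
        unfold psi0
        apply mul_le_mul h1 h3 (by positivity) (by positivity)
    _ = (2 ^ l * 2 ^ ((1 + k) / 2)) * ((1 + |s|) ^ l * ((1 + |s|) ^ (1 + k))⁻¹) := by ring
    _ = (2 ^ l * 2 ^ ((1 + k) / 2)) * (1 + ‖s‖) ^ (-(1 + k - l)) := by
        rw [← Real.rpow_neg hb.le, ← Real.rpow_add hb, Real.norm_eq_abs]
        ring_nf

lemma psi0_integrable {k l : ℝ} (hl : 0 ≤ l) (hk : l < k) : Integrable (psi0 k l) := by
  have h1 : (Module.finrank ℝ ℝ : ℝ) < 1 + k - l := by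
    simp only [Module.finrank_self, Nat.cast_one]
    linarith
  refine Integrable.mono' ((integrable_one_add_norm h1).const_mul
    (2 ^ l * 2 ^ ((1 + k) / 2))) (psi0_continuous k l).aestronglyMeasurable ?_
  filter_upwards with s
  rw [Real.norm_eq_abs, _root_.abs_of_nonneg (psi0_nonneg k l s)]
  exact psi0_le hl (by linarith) s

lemma decay_aux {d y e q : ℝ} (hd : 0 < d) (hq : 0 < q) (hy : d ≤ |y|) (he : e ≤ -q) :
    |y| ^ e ≤ (d / (1 + d)) ^ e * (1 + |y|) ^ (-q) := by
  have hy0 : (0:ℝ) < |y| := lt_of_lt_of_le hd hy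
  have hb : (0:ℝ) < d / (1 + d) * (1 + |y|) := by positivity
  have hbb : d / (1 + d) * (1 + |y|) ≤ |y| := by
    rw [div_mul_eq_mul_div, div_le_iff₀ (by positivity)]
    nlinarith
  have he0 : e ≤ 0 := le_trans he (by linarith)
  calc |y| ^ e ≤ (d / (1 + d) * (1 + |y|)) ^ e :=
        Real.rpow_le_rpow_of_nonpos hb hbb he0
    _ = (d / (1 + d)) ^ e * (1 + |y|) ^ e := Real.mul_rpow (by positivity) (by positivity)
    _ ≤ (d / (1 + d)) ^ e * (1 + |y|) ^ (-q) := by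
        apply mul_le_mul_of_nonneg_left _ (by positivity)
        exact Real.rpow_le_rpow_of_exponent_le (by linarith [abs_nonneg y]) he

lemma horizLim_bound {f : ℂ → ℂ} {C0 l : ℝ} (hl : 0 ≤ l) (hC : 0 ≤ C0)
    (hf : ∀ s : ℂ, 0 < s.re → ‖f s‖ ≤ C0 * (1 + ‖s‖) ^ l) (y : ℝ) :
    ‖horizLim f y‖ ≤ C0 * (2 + |y|) ^ l := by
  unfold horizLim
  split_ifs with h
  · have hT := h.choose_spec
    have habs : Tendsto (fun e : ℝ => ‖f ((e:ℂ) + (y:ℂ) * Complex.I)‖)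
        (nhdsWithin 0 (Ioi 0)) (nhds (‖h.choose‖)) :=
      (continuous_norm.tendsto _).comp hT
    refine le_of_tendsto habs ?_
    filter_upwards [Ioo_mem_nhdsGT_of_mem (⟨le_refl (0:ℝ), by norm_num⟩ : (0:ℝ) ∈ Ico 0 1)]
      with e he
    obtain ⟨he0, he1⟩ := he
    have hre : (0:ℝ) < ((e:ℂ) + (y:ℂ) * Complex.I).re := by simpa using he0
    refine le_trans (hf _ hre) ?_
    have habs2 : ‖(e:ℂ) + (y:ℂ) * Complex.I‖ ≤ 1 + |y| := by
      refine le_trans (norm_add_le _ _) ?_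
      rw [norm_mul, Complex.norm_I, mul_one, Complex.norm_real, Complex.norm_real,
        Real.norm_eq_abs, Real.norm_eq_abs, _root_.abs_of_pos he0]
      linarith
    apply mul_le_mul_of_nonneg_left _ hC
    apply Real.rpow_le_rpow (by positivity) (by linarith) hl
  · simp only [norm_zero]
    positivity

set_option maxHeartbeats 2000000 in
lemma rker_norm_le (k l : ℝ) (hl : 0 ≤ l) (hk : l < k) (δ : ℝ) (hδ : 0 < δ) :
    ∃ C, 0 ≤ C ∧ ∀ x : ℝ, 1 ≤ x → ∀ y : ℝ, δ ≤ |y| →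
      ‖Rker k l x y‖ ≤ C * (x ^ (-min k 1) * (1 + |y|) ^ (-min (1 + k - l) 2)) := by
  have hk0 : 0 < k := lt_of_le_of_lt hl hk
  have hCk0 : 0 < Real.Gamma (1 + k) * Real.exp 1 / (2 * Real.pi) :=
    div_pos (mul_pos (Real.Gamma_pos_of_pos (by linarith)) (Real.exp_pos 1)) (by positivity)
  set Ck := Real.Gamma (1 + k) * Real.exp 1 / (2 * Real.pi) with hCkdef
  set C2 : ℝ := 2 / δ + 3 / 2 with hC2def
  have hC2 : 0 < C2 := by positivity
  have hpsiInt := psi0_integrable hl hk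
  set J0 := ∫ s : ℝ, psi0 k l s with hJ0def
  have hJ0 : 0 ≤ J0 := integral_nonneg (fun s => psi0_nonneg k l s)
  refine ⟨Ck * C2 ^ l * 2 ^ (1 + k) * (δ / (1 + δ)) ^ (l - 1 - k)
      + Ck * (4 / Real.pi) * (δ / (1 + δ)) ^ (-2 : ℝ) * J0, by positivity, ?_⟩
  intro x hx y hy
  have hx0 : (0:ℝ) < x := lt_of_lt_of_le one_pos hx
  have hu : (0:ℝ) < x⁻¹ := inv_pos.2 hx0
  have hy0 : (0:ℝ) < |y| := lt_of_lt_of_le hδ hy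
  have hyne : y ≠ 0 := abs_pos.mp hy0
  set cA := Ck * (C2 * |y|) ^ l * (x * ((x * (|y| / 2)) ^ (1 + k))⁻¹) with hcAdef
  set cB := Ck * (4 / (Real.pi * y ^ 2)) * x⁻¹ with hcBdef
  have hcA0 : 0 ≤ cA := by
    rw [hcAdef]; positivity
  have hcB0 : 0 ≤ cB := by
    rw [hcBdef]; positivity
  -- pointwise bound on the integrand of `Rker`
  have key : ∀ t : ℝ,
      ‖((poisson x⁻¹ (t - y) : ℝ) : ℂ) * Complex.exp (Complex.I * (t:ℂ) * (x:ℂ)) *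
        (1 + ((x⁻¹ : ℝ) : ℂ) + Complex.I * (t:ℂ)) ^ ((l : ℝ) : ℂ) * Kker k x t‖ ≤
        cA * poisson x⁻¹ (t - y) + (cB * x) * psi0 k l (x * t) := by
    intro t
    have hPnn := poisson_nonneg hu.le (t - y)
    have hA : ‖1 + Complex.I * (x:ℂ) * (t:ℂ)‖ = Real.sqrt (1 + (x * t) ^ 2) := by
      rw [Complex.norm_def]
      congr 1
      simp [Complex.normSq_apply]
      ring
    have hApow : ‖1 + Complex.I * (x:ℂ) * (t:ℂ)‖ ^ (1 + k)
        = (1 + (x * t) ^ 2) ^ ((1 + k) / 2) := by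
      rw [hA, Real.sqrt_eq_rpow, ← Real.rpow_mul (by positivity)]
      congr 1
      ring
    have hAge : x * |t| ≤ ‖1 + Complex.I * (x:ℂ) * (t:ℂ)‖ := by
      rw [hA]
      calc x * |t| = Real.sqrt ((x * t) ^ 2) := by
            rw [Real.sqrt_sq_eq_abs, abs_mul, _root_.abs_of_pos hx0]
        _ ≤ Real.sqrt (1 + (x * t) ^ 2) := Real.sqrt_le_sqrt (by nlinarith)
    have hnorm : ‖((poisson x⁻¹ (t - y) : ℝ) : ℂ) * Complex.exp (Complex.I * (t:ℂ) * (x:ℂ)) *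
        (1 + ((x⁻¹ : ℝ) : ℂ) + Complex.I * (t:ℂ)) ^ ((l : ℝ) : ℂ) * Kker k x t‖ =
        poisson x⁻¹ (t - y) *
          ‖1 + ((x⁻¹ : ℝ) : ℂ) + Complex.I * (t:ℂ)‖ ^ l *
          (Ck * x / ‖1 + Complex.I * (x:ℂ) * (t:ℂ)‖ ^ (1 + k)) := by
      rw [norm_mul, norm_mul, norm_mul]
      rw [Complex.norm_real, Real.norm_eq_abs, _root_.abs_of_nonneg hPnn]
      rw [Complex.norm_exp]
      have hre0 : (Complex.I * (t:ℂ) * (x:ℂ)).re = 0 := by simp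
      rw [hre0, Real.exp_zero, mul_one]
      rw [Complex.norm_cpow_real]
      unfold Kker
      rw [norm_div, norm_mul, Complex.norm_cpow_real, Complex.norm_real, Complex.norm_real,
        Real.norm_eq_abs, Real.norm_eq_abs,
        _root_.abs_of_pos hCk0, _root_.abs_of_pos hx0]
    have hWt : ‖1 + ((x⁻¹ : ℝ) : ℂ) + Complex.I * (t:ℂ)‖ ≤ (1 + x⁻¹) + |t| := by
      refine le_trans (norm_add_le _ _) ?_
      rw [norm_mul, Complex.norm_I, one_mul, Complex.norm_real, Real.norm_eq_abs,
        show (1 : ℂ) + ((x⁻¹ : ℝ) : ℂ) = (((1 + x⁻¹ : ℝ)) : ℂ) by push_cast; ring,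
        Complex.norm_real, Real.norm_eq_abs, _root_.abs_of_pos (by positivity : (0:ℝ) < 1 + x⁻¹)]
    have hxinv1 : x⁻¹ ≤ 1 := inv_le_one_of_one_le₀ hx
    rcases le_or_gt (|t - y|) (|y| / 2) with hcase | hcase
    · -- region A : t near y
      have ht1 : |y| / 2 ≤ |t| := by
        have h := abs_sub_abs_le_abs_sub y t
        rw [abs_sub_comm y t] at h
        linarith
      have ht2 : |t| ≤ 3 * |y| / 2 := by
        have h := abs_sub_abs_le_abs_sub t y
        linarith
      have hW : ‖1 + ((x⁻¹ : ℝ) : ℂ) + Complex.I * (t:ℂ)‖ ≤ C2 * |y| := by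
        refine le_trans hWt ?_
        have h2 : 2 ≤ 2 / δ * |y| := by
          rw [div_mul_eq_mul_div, le_div_iff₀ hδ]
          nlinarith
        rw [hC2def]
        nlinarith
      have hb1 : ‖1 + ((x⁻¹ : ℝ) : ℂ) + Complex.I * (t:ℂ)‖ ^ l ≤ (C2 * |y|) ^ l :=
        Real.rpow_le_rpow (norm_nonneg _) hW hl
      have hAgey : (x * (|y| / 2)) ^ (1 + k) ≤
          ‖1 + Complex.I * (x:ℂ) * (t:ℂ)‖ ^ (1 + k) := by
        apply Real.rpow_le_rpow (by positivity) _ (by linarith)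
        exact le_trans (by nlinarith : x * (|y| / 2) ≤ x * |t|) hAge
      have hb2 : Ck * x / ‖1 + Complex.I * (x:ℂ) * (t:ℂ)‖ ^ (1 + k) ≤
          Ck * x * ((x * (|y| / 2)) ^ (1 + k))⁻¹ := by
        rw [div_eq_mul_inv]
        apply mul_le_mul_of_nonneg_left _ (by positivity)
        exact inv_anti₀ (by positivity) hAgey
      rw [hnorm]
      calc poisson x⁻¹ (t - y) * ‖1 + ((x⁻¹ : ℝ) : ℂ) + Complex.I * (t:ℂ)‖ ^ l *
            (Ck * x / ‖1 + Complex.I * (x:ℂ) * (t:ℂ)‖ ^ (1 + k))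
          ≤ poisson x⁻¹ (t - y) * (C2 * |y|) ^ l * (Ck * x * ((x * (|y| / 2)) ^ (1 + k))⁻¹) := by
            apply mul_le_mul (mul_le_mul_of_nonneg_left hb1 hPnn) hb2 (by positivity)
              (by positivity)
        _ = cA * poisson x⁻¹ (t - y) := by rw [hcAdef]; ring
        _ ≤ cA * poisson x⁻¹ (t - y) + (cB * x) * psi0 k l (x * t) := by
            have h0 : 0 ≤ (cB * x) * psi0 k l (x * t) :=
              mul_nonneg (mul_nonneg hcB0 hx0.le) (psi0_nonneg k l (x * t))
            linarith
    · -- region B : t far from y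
      have hp1 : poisson x⁻¹ (t - y) ≤ 4 / (Real.pi * y ^ 2) * x⁻¹ := by
        unfold poisson
        have h1 : (|y| / 2) ^ 2 ≤ (x⁻¹) ^ 2 + (t - y) ^ 2 := by
          have h2 : (|y| / 2) ^ 2 ≤ (t - y) ^ 2 := by
            rw [← _root_.sq_abs (t - y)]
            apply pow_le_pow_left₀ (by positivity) hcase.le
          nlinarith [sq_nonneg x⁻¹]
        calc 1 / Real.pi * x⁻¹ / ((x⁻¹) ^ 2 + (t - y) ^ 2)
            ≤ 1 / Real.pi * x⁻¹ / ((|y| / 2) ^ 2) :=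
              div_le_div_of_nonneg_left (by positivity) (by positivity) h1
          _ = 4 / (Real.pi * y ^ 2) * x⁻¹ := by
              rw [show (|y| / 2) ^ 2 = y ^ 2 / 4 by rw [div_pow, _root_.sq_abs]; norm_num]
              field_simp
      have hb2 : ‖1 + ((x⁻¹ : ℝ) : ℂ) + Complex.I * (t:ℂ)‖ ^ l ≤
          (2 + |x * t|) ^ l := by
        apply Real.rpow_le_rpow (norm_nonneg _) _ hl
        refine le_trans hWt ?_
        have h2 : |t| ≤ |x * t| := by
          rw [abs_mul, _root_.abs_of_pos hx0]
          nlinarith [abs_nonneg t]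
        linarith
      rw [hnorm, hApow]
      calc poisson x⁻¹ (t - y) * ‖1 + ((x⁻¹ : ℝ) : ℂ) + Complex.I * (t:ℂ)‖ ^ l *
            (Ck * x / (1 + (x * t) ^ 2) ^ ((1 + k) / 2))
          ≤ (4 / (Real.pi * y ^ 2) * x⁻¹) * (2 + |x * t|) ^ l *
            (Ck * x / (1 + (x * t) ^ 2) ^ ((1 + k) / 2)) := by
            apply mul_le_mul_of_nonneg_right
              (mul_le_mul hp1 hb2 (by positivity) (by positivity)) (by positivity)
        _ = (cB * x) * psi0 k l (x * t) := by
            rw [hcBdef]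
            unfold psi0
            rw [div_eq_mul_inv]
            ring
        _ ≤ cA * poisson x⁻¹ (t - y) + (cB * x) * psi0 k l (x * t) :=
            le_add_of_nonneg_left (mul_nonneg hcA0 hPnn)
  -- integrate the bound
  have hint1 : Integrable (fun t : ℝ => poisson x⁻¹ (t - y)) :=
    (integrable_poisson hu).comp_sub_right y
  have hint2 : Integrable (fun t : ℝ => psi0 k l (x * t)) :=
    hpsiInt.comp_mul_left' hx0.ne'
  have hGint : Integrable
      (fun t : ℝ => cA * poisson x⁻¹ (t - y) + (cB * x) * psi0 k l (x * t)) :=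
    (hint1.const_mul cA).add (hint2.const_mul (cB * x))
  have hsum : (∫ t : ℝ, (cA * poisson x⁻¹ (t - y) + (cB * x) * psi0 k l (x * t)))
      = cA + cB * J0 := by
    rw [integral_add (hint1.const_mul cA) (hint2.const_mul (cB * x)),
      integral_const_mul, integral_const_mul,
      integral_sub_right_eq_self (poisson x⁻¹) y, integral_poisson hu,
      MeasureTheory.Measure.integral_comp_mul_left (psi0 k l) x, smul_eq_mul,
      _root_.abs_of_pos (inv_pos.2 hx0), mul_one]
    rw [← hJ0def]
    field_simp
  -- final arithmetic
  have hrq1 : min k 1 ≤ k := min_le_left _ _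
  have hrq2 : min k 1 ≤ 1 := min_le_right _ _
  have hq1 : min (1 + k - l) 2 ≤ 1 + k - l := min_le_left _ _
  have hq2 : (0:ℝ) < min (1 + k - l) 2 := lt_min (by linarith) (by norm_num)
  have hxr : x ^ (-k) ≤ x ^ (-min k 1) :=
    Real.rpow_le_rpow_of_exponent_le hx (by linarith)
  have hx1r : x ^ (-1:ℝ) ≤ x ^ (-min k 1) :=
    Real.rpow_le_rpow_of_exponent_le hx (by linarith)
  have hcA_le : cA ≤ Ck * C2 ^ l * 2 ^ (1 + k) * (δ / (1 + δ)) ^ (l - 1 - k) *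
      (x ^ (-min k 1) * (1 + |y|) ^ (-min (1 + k - l) 2)) := by
    have e1 : (C2 * |y|) ^ l = C2 ^ l * |y| ^ l := Real.mul_rpow hC2.le (abs_nonneg y)
    have e2 : (x * (|y| / 2)) ^ (1 + k) = x ^ (1 + k) * (|y| ^ (1 + k) / 2 ^ (1 + k)) := by
      rw [Real.mul_rpow hx0.le (by positivity), Real.div_rpow (abs_nonneg y) (by norm_num)]
    have e3 : x * (x ^ (1 + k : ℝ))⁻¹ = x ^ (-k : ℝ) := by
      have h := Real.rpow_natCast x 1
      have h2 : x ^ (-k : ℝ) * x ^ (1 + k : ℝ) = x := by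
        rw [← Real.rpow_add hx0, show -k + (1 + k) = (1:ℝ) by ring, Real.rpow_one]
      field_simp [ne_of_gt (Real.rpow_pos_of_pos hx0 (1 + k))]
      linarith [h2]
    have e4 : |y| ^ l * (|y| ^ (1 + k : ℝ))⁻¹ = |y| ^ (l - 1 - k) := by
      rw [← Real.rpow_neg (abs_nonneg y), ← Real.rpow_add hy0]
      congr 1
      ring
    have e5 : |y| ^ (l - 1 - k) ≤ (δ / (1 + δ)) ^ (l - 1 - k) * (1 + |y|) ^ (-min (1 + k - l) 2) :=
      decay_aux hδ hq2 hy (by linarith)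
    have ecA : cA = Ck * C2 ^ l * 2 ^ (1 + k) * (x ^ (-k : ℝ)) * (|y| ^ (l - 1 - k)) := by
      rw [hcAdef, e1, e2, ← e4, ← e3]
      have h2pos : (0:ℝ) < (2:ℝ) ^ (1 + k : ℝ) := Real.rpow_pos_of_pos (by norm_num) _
      have hxpos : (0:ℝ) < x ^ (1 + k : ℝ) := Real.rpow_pos_of_pos hx0 _
      have hypos : (0:ℝ) < |y| ^ (1 + k : ℝ) := Real.rpow_pos_of_pos hy0 _
      field_simp
    rw [ecA]
    calc Ck * C2 ^ l * 2 ^ (1 + k) * x ^ (-k : ℝ) * |y| ^ (l - 1 - k)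
        ≤ Ck * C2 ^ l * 2 ^ (1 + k) * x ^ (-min k 1) *
          ((δ / (1 + δ)) ^ (l - 1 - k) * (1 + |y|) ^ (-min (1 + k - l) 2)) := by
          apply mul_le_mul (mul_le_mul_of_nonneg_left hxr (by positivity)) e5
            (by positivity) (by positivity)
      _ = Ck * C2 ^ l * 2 ^ (1 + k) * (δ / (1 + δ)) ^ (l - 1 - k) *
          (x ^ (-min k 1) * (1 + |y|) ^ (-min (1 + k - l) 2)) := by ring
  have hcB_le : cB * J0 ≤ Ck * (4 / Real.pi) * (δ / (1 + δ)) ^ (-2 : ℝ) * J0 *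
      (x ^ (-min k 1) * (1 + |y|) ^ (-min (1 + k - l) 2)) := by
    have f1 : (y ^ 2)⁻¹ = |y| ^ (-2 : ℝ) := by
      rw [Real.rpow_neg (abs_nonneg y), show ((2:ℝ) = ((2:ℕ):ℝ)) by norm_num,
        Real.rpow_natCast, _root_.sq_abs]
    have f2 : |y| ^ (-2 : ℝ) ≤ (δ / (1 + δ)) ^ (-2 : ℝ) * (1 + |y|) ^ (-min (1 + k - l) 2) :=
      decay_aux hδ hq2 hy (by have := min_le_right (1 + k - l) 2; linarith)
    have f3 : x⁻¹ = x ^ (-1 : ℝ) := (Real.rpow_neg_one x).symm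
    have ecB : cB * J0 = Ck * 4 / Real.pi * J0 * (x ^ (-1:ℝ)) * ((y ^ 2)⁻¹) := by
      rw [hcBdef, ← f3]
      field_simp
      try ring
      try tauto
    rw [ecB, f1]
    calc Ck * 4 / Real.pi * J0 * x ^ (-1:ℝ) * |y| ^ (-2:ℝ)
        ≤ Ck * 4 / Real.pi * J0 * x ^ (-min k 1) *
          ((δ / (1 + δ)) ^ (-2:ℝ) * (1 + |y|) ^ (-min (1 + k - l) 2)) := by
          apply mul_le_mul (mul_le_mul_of_nonneg_left hx1r (by positivity)) f2
            (by positivity) (by positivity)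
      _ = Ck * (4 / Real.pi) * (δ / (1 + δ)) ^ (-2:ℝ) * J0 *
          (x ^ (-min k 1) * (1 + |y|) ^ (-min (1 + k - l) 2)) := by ring
  calc ‖Rker k l x y‖
      ≤ ∫ t : ℝ, ‖((poisson x⁻¹ (t - y) : ℝ) : ℂ) * Complex.exp (Complex.I * (t:ℂ) * (x:ℂ)) *
          (1 + ((x⁻¹ : ℝ) : ℂ) + Complex.I * (t:ℂ)) ^ ((l : ℝ) : ℂ) * Kker k x t‖ := by
        unfold Rker
        exact norm_integral_le_integral_norm _
    _ ≤ ∫ t : ℝ, (cA * poisson x⁻¹ (t - y) + (cB * x) * psi0 k l (x * t)) :=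
        integral_mono_of_nonneg (Eventually.of_forall fun t => norm_nonneg _) hGint
          (Eventually.of_forall key)
    _ = cA + cB * J0 := hsum
    _ ≤ (Ck * C2 ^ l * 2 ^ (1 + k) * (δ / (1 + δ)) ^ (l - 1 - k)
        + Ck * (4 / Real.pi) * (δ / (1 + δ)) ^ (-2 : ℝ) * J0) *
        (x ^ (-min k 1) * (1 + |y|) ^ (-min (1 + k - l) 2)) := by
        have := add_le_add hcA_le hcB_le
        linarith [this]

end S13aux


set_option maxHeartbeats 1000000 in
/-- For `k > ℓ ≥ 0`, `f ∈ H^λ_{∞,ℓ}[Re > 0]` with horizontal limit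
function `f*`, and every `δ > 0`:
`lim_{x→∞} ∫_{|y|≥δ} f*(iy) R^{k,ℓ}(x,y)/(1+iy)^ℓ dy = 0`. -/
theorem statement13 (lam : ℕ → ℝ) (hlam : IsFrequency lam) (a : ℕ → ℂ) (k l : ℝ)
    (hl : 0 ≤ l) (hk : l < k) (f : ℂ → ℂ) (hf : MemHlam lam a l f)
    (δ : ℝ) (hδ : 0 < δ) :
    Tendsto (fun x : ℝ => ∫ y in {y : ℝ | δ ≤ |y|},
        horizLim f y * Rker k l x y / (1 + Complex.I * (y : ℂ)) ^ ((l : ℝ) : ℂ))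
      atTop (nhds 0) := by

  obtain ⟨hdiff, ⟨C0, hC0⟩, hgerm⟩ := hf
  have hC0' : (0:ℝ) ≤ C0 := by
    have h1 := hC0 1 (by simp)
    have hp : (0:ℝ) < (1 + ‖(1:ℂ)‖) ^ l := Real.rpow_pos_of_pos (by norm_num [map_one]) l
    nlinarith [norm_nonneg (f 1)]
  obtain ⟨CK, hCK0, hCK⟩ := S13aux.rker_norm_le k l hl hk δ hδ
  set r := min k 1 with hrdef
  set q := min (1 + k - l) 2 with hqdef
  have hr : 0 < r := lt_min (by linarith) one_pos
  have hq1 : (1:ℝ) < q := lt_min (by linarith) (by norm_num)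
  have hintq : Integrable (fun y : ℝ => (1 + |y|) ^ (-q)) := by
    have h := integrable_one_add_norm (E := ℝ) (μ := volume) (r := q)
      (by simp only [Module.finrank_self, Nat.cast_one]; linarith)
    simpa [Real.norm_eq_abs] using h
  set S := {y : ℝ | δ ≤ |y|} with hSdef
  have hSm : MeasurableSet S := (isClosed_le continuous_const _root_.continuous_abs).measurableSet
  set M := ∫ y in S, (1 + |y|) ^ (-q) with hMdef
  apply squeeze_zero_norm' (a := fun x : ℝ => (3 ^ l * C0 * CK * M) * x ^ (-r))
  · filter_upwards [eventually_ge_atTop (1:ℝ)] with x hx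
    have hbd : ∀ y ∈ S, ‖horizLim f y * Rker k l x y / (1 + Complex.I * (y:ℂ)) ^ ((l:ℝ):ℂ)‖ ≤
        (3 ^ l * C0 * CK * x ^ (-r)) * (1 + |y|) ^ (-q) := by
      intro y hy
      have hy' : δ ≤ |y| := hy
      have h1 : ‖horizLim f y‖ ≤ C0 * (2 + |y|) ^ l :=
        S13aux.horizLim_bound hl hC0' hC0 y
      have h2 : ‖Rker k l x y‖ ≤ CK * (x ^ (-r) * (1 + |y|) ^ (-q)) := by
        have := hCK x hx y hy'
        exact this
      have hAy : ‖1 + Complex.I * (y:ℂ)‖ = Real.sqrt (1 + y ^ 2) := by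
        rw [Complex.norm_def]
        congr 1
        simp [Complex.normSq_apply]
        ring
      have hge1 : (1:ℝ) ≤ Real.sqrt (1 + y ^ 2) := by
        have := Real.sqrt_le_sqrt (show (1:ℝ) ≤ 1 + y ^ 2 by nlinarith)
        simpa using this
      have hgey : |y| ≤ Real.sqrt (1 + y ^ 2) := by
        have := Real.sqrt_le_sqrt (show y ^ 2 ≤ 1 + y ^ 2 by nlinarith)
        simpa [Real.sqrt_sq_eq_abs] using this
      have habs : (2 + |y|) / 3 ≤ ‖1 + Complex.I * (y:ℂ)‖ := by
        rw [hAy]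
        linarith
      have hdenpos : (0:ℝ) < ((2 + |y|) / 3) ^ l := Real.rpow_pos_of_pos (by positivity) l
      have h3 : ((2 + |y|) / 3) ^ l ≤ ‖1 + Complex.I * (y:ℂ)‖ ^ l :=
        Real.rpow_le_rpow (by positivity) habs hl
      rw [norm_div, norm_mul, Complex.norm_cpow_real]
      calc ‖horizLim f y‖ * ‖Rker k l x y‖ /
            ‖1 + Complex.I * (y:ℂ)‖ ^ l
          ≤ (C0 * (2 + |y|) ^ l) * (CK * (x ^ (-r) * (1 + |y|) ^ (-q))) /
            (((2 + |y|) / 3) ^ l) := by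
            apply div_le_div₀ (by positivity) ?_ hdenpos h3
            exact mul_le_mul h1 h2 (norm_nonneg _) (by positivity)
        _ = (3 ^ l * C0 * CK * x ^ (-r)) * (1 + |y|) ^ (-q) := by
            rw [Real.div_rpow (by positivity) (by norm_num)]
            have hne : ((2 + |y|) : ℝ) ^ l ≠ 0 :=
              ne_of_gt (Real.rpow_pos_of_pos (by positivity) l)
            have hne3 : ((3:ℝ)) ^ l ≠ 0 := ne_of_gt (Real.rpow_pos_of_pos (by norm_num) l)
            field_simp
    calc ‖∫ y in S, horizLim f y * Rker k l x y / (1 + Complex.I * (y:ℂ)) ^ ((l:ℝ):ℂ)‖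
        ≤ ∫ y in S, ‖horizLim f y * Rker k l x y / (1 + Complex.I * (y:ℂ)) ^ ((l:ℝ):ℂ)‖ :=
          norm_integral_le_integral_norm _
      _ ≤ ∫ y in S, (3 ^ l * C0 * CK * x ^ (-r)) * (1 + |y|) ^ (-q) := by
          apply integral_mono_of_nonneg (Eventually.of_forall fun y => norm_nonneg _)
            ((hintq.const_mul _).integrableOn)
          exact (ae_restrict_iff' hSm).2 (Eventually.of_forall hbd)
      _ = (3 ^ l * C0 * CK * M) * x ^ (-r) := by
          rw [integral_const_mul, ← hMdef]
          ring
  · have h0 := (tendsto_rpow_neg_atTop hr).const_mul (3 ^ l * C0 * CK * M)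
    simpa using h0
end
end
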